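/- arXiv:0905.4065 — 13 statements merged into one kernel-verified Lean document; each statement's English description precedes it below -/
import Mathlib

section
/- Let 𝔄 be a C*-algebra, 𝔛 a complex linear space, and ⟨·,·⟩ : 𝔛 × 𝔛 → 𝔄 an 𝔄-valued positive sesquilinear form. Suppose x, y ∈ 𝔛 and ω, Ω ∈ ℂ satisfy: (i) ⟨x,y⟩* = ⟨y,x⟩; (ii) ⟨y,y⟩^{1/2}⟨x,y⟩ = ⟨x,y⟩⟨y,y⟩^{1/2}; (iii) Re ⟨Ωy − x, x − ωy⟩ ≥ 0. Then |⟨x,x⟩^{1/2}⟨y,y⟩^{1/2}|² − |⟨y,x⟩|² ≤ (1/4)|Ω − ω|² ⟨y,y⟩². -/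
open scoped ComplexOrder

/-- **Additive reverse Cauchy–Schwarz inequality** for a positive `A`-valued sesquilinear
form `B` on a complex linear space `X`, where `A` is a C*-algebra. -/
theorem additive_reverse_cauchy_schwarz
    {A : Type*} [CStarAlgebra A] [PartialOrder A] [StarOrderedRing A]
    {X : Type*} [AddCommGroup X] [Module ℂ X]
    (B : X → X → A)
    (h_add_left : ∀ x x' y : X, B (x + x') y = B x y + B x' y)
    (h_smul_left : ∀ (c : ℂ) (x y : X), B (c • x) y = c • B x y)
    (h_add_right : ∀ x y y' : X, B x (y + y') = B x y + B x y')
    (h_smul_right : ∀ (c : ℂ) (x y : X), B x (c • y) = (starRingEnd ℂ c) • B x y)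
    (h_pos : ∀ x : X, 0 ≤ B x x)
    (x y : X) (ω Ω : ℂ)
    (h1 : star (B x y) = B y x)
    (h2 : CFC.sqrt (B y y) * B x y = B x y * CFC.sqrt (B y y))
    (h3 : 0 ≤ (2 : ℝ)⁻¹ • (B (Ω • y - x) (x - ω • y) + star (B (Ω • y - x) (x - ω • y)))) :
    star (CFC.sqrt (B x x) * CFC.sqrt (B y y)) * (CFC.sqrt (B x x) * CFC.sqrt (B y y))
        - star (B y x) * B y x
      ≤ ((4 : ℝ)⁻¹ * ‖Ω - ω‖ ^ 2) • (B y y) ^ 2 := by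
  set a := B x x with ha_def
  set b := B y y with hb_def
  set c := B x y with hc_def
  set s := CFC.sqrt b with hs_def
  have hb : (0:A) ≤ b := h_pos y
  have ha : (0:A) ≤ a := h_pos x
  have hss : s * s = b := CFC.sqrt_mul_sqrt_self b hb
  have hsnn : (0:A) ≤ s := CFC.sqrt_nonneg b
  have hstar_s : star s = s := IsSelfAdjoint.of_nonneg hsnn
  have hstar_b : star b = b := IsSelfAdjoint.of_nonneg hb
  have hstar_a : star a = a := IsSelfAdjoint.of_nonneg ha
  have hsc : s * c = c * s := h2
  have hscs : s * star c = star c * s := by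
    have := congrArg star h2
    simpa [star_mul, hstar_s] using this.symm
  -- subtraction linearity
  have h_sub_left : ∀ u v w : X, B (u - v) w = B u w - B v w := by
    intro u v w
    have h := h_add_left (u - v) v w
    rw [sub_add_cancel] at h
    exact eq_sub_of_add_eq h.symm
  have h_sub_right : ∀ u v w : X, B u (v - w) = B u v - B u w := by
    intro u v w
    have h := h_add_right u (v - w) w
    rw [sub_add_cancel] at h
    exact eq_sub_of_add_eq h.symm
  -- expansion of the middle term
  have hD : B (Ω • y - x) (x - ω • y)
      = Ω • star c + (starRingEnd ℂ ω) • c - (Ω * starRingEnd ℂ ω) • b - a := by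
    rw [h_sub_left, h_sub_right, h_sub_right, h_smul_left, h_smul_left, h_smul_right,
      h_smul_right, ← h1, ← ha_def, ← hb_def, ← hc_def, smul_smul]
    module
  set D := B (Ω • y - x) (x - ω • y) with hD_def
  have hDs : star D = (starRingEnd ℂ Ω) • c + ω • star c
      - (starRingEnd ℂ Ω * ω) • b - a := by
    rw [hD]
    simp only [star_sub, star_add, star_smul, star_star, hstar_a, hstar_b, RCLike.star_def,
      map_mul, Complex.conj_conj]
  -- the conjugated middle term
  have e1 : s * c * s = c * b := by rw [hsc, mul_assoc, hss]
  have e2 : s * star c * s = star c * b := by rw [hscs, mul_assoc, hss]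
  have e3 : s * b * s = b ^ 2 := by rw [← hss, sq]; noncomm_ring
  have hbc : b * star c = star c * b := by
    rw [← hss, mul_assoc, hscs, ← mul_assoc, hscs, mul_assoc, hss]
  have hW : D + star D = (starRingEnd ℂ Ω + starRingEnd ℂ ω) • c + (Ω + ω) • star c
      - (Ω * starRingEnd ℂ ω + starRingEnd ℂ Ω * ω) • b - (2:ℂ) • a := by
    rw [hDs, hD]; module
  have hsWs : s * (D + star D) * s
      = (starRingEnd ℂ Ω + starRingEnd ℂ ω) • (c * b) + (Ω + ω) • (star c * b)
        - (Ω * starRingEnd ℂ ω + starRingEnd ℂ Ω * ω) • b ^ 2 - (2:ℂ) • (s * a * s) := by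
    rw [hW]
    simp only [mul_sub, sub_mul, mul_add, add_mul, mul_smul_comm, smul_mul_assoc, e1, e2, e3]
  -- the square term
  set m : ℂ := (Ω + ω) / 2 with hm_def
  set u : A := c - m • b with hu_def
  have hu : u * star u = c * star c - (starRingEnd ℂ m) • (c * b) - m • (star c * b)
      + (m * starRingEnd ℂ m) • b ^ 2 := by
    rw [hu_def]
    simp only [star_sub, star_smul, hstar_b, RCLike.star_def, mul_sub, sub_mul,
      mul_smul_comm, smul_mul_assoc, smul_smul, hbc, sq]
    module
  -- rewrite the goal
  have hraa : CFC.sqrt a * CFC.sqrt a = a := CFC.sqrt_mul_sqrt_self a ha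
  have hstar_ra : star (CFC.sqrt a) = CFC.sqrt a :=
    IsSelfAdjoint.of_nonneg (CFC.sqrt_nonneg a)
  have hL1 : star (CFC.sqrt a * s) * (CFC.sqrt a * s) = s * a * s := by
    rw [star_mul, hstar_s, hstar_ra]
    calc s * CFC.sqrt a * (CFC.sqrt a * s)
        = s * (CFC.sqrt a * CFC.sqrt a) * s := by noncomm_ring
      _ = s * a * s := by rw [hraa]
  have hL2 : star (B y x) * B y x = c * star c := by
    rw [← h1, star_star]
  rw [hL1, hL2, ← sub_nonneg]
  -- the key algebraic identity
  have hK : ((4:ℝ)⁻¹ * ‖Ω - ω‖ ^ 2) • b ^ 2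
      = ((4:ℂ)⁻¹ * ((Ω - ω) * ((starRingEnd ℂ Ω) - (starRingEnd ℂ ω)))) • b ^ 2 := by
    rw [← Complex.coe_smul]
    congr 1
    push_cast [Complex.sq_norm]
    rw [← Complex.mul_conj]
    simp only [map_sub]
  have key : ((4:ℝ)⁻¹ * ‖Ω - ω‖ ^ 2) • b ^ 2 - (s * a * s - c * star c)
      = u * star u + s * ((2:ℝ)⁻¹ • (D + star D)) * s := by
    have h2s : s * ((2:ℝ)⁻¹ • (D + star D)) * s = ((2:ℂ)⁻¹) • (s * (D + star D) * s) := by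
      rw [mul_smul_comm, smul_mul_assoc, ← Complex.coe_smul]
      norm_num
    rw [h2s, hK, hsWs, hu, hm_def]
    simp only [map_div₀, map_add, map_ofNat]
    module
  rw [key]
  exact add_nonneg (mul_star_self_nonneg u)
    (by simpa [hstar_s] using star_left_conjugate_nonneg h3 s)
end

section
/- Let 𝔄 be a C*-algebra, 𝔛 a complex linear space, and ⟨·,·⟩ : 𝔛 × 𝔛 → 𝔄 an 𝔄-valued positive sesquilinear form. Suppose x, y ∈ 𝔛 and ω, Ω ∈ ℂ satisfy: (i) ⟨x,y⟩* = ⟨y,x⟩; (ii) ⟨x,y⟩ is a normal element of 𝔄; (iii) Re ⟨Ωy − x, x − ωy⟩ ≥ 0; and (iv) Re(ω̄Ω) > 0. Then ⟨x,x⟩^{1/2}⟨y,y⟩^{1/2} + ⟨y,y⟩^{1/2}⟨x,x⟩^{1/2} ≤ ((|Ω| + |ω|)/√(Re(ω̄Ω))) · |⟨x,y⟩|. -/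
open scoped ComplexOrder

section Aux
variable {A : Type*} [CStarAlgebra A] [PartialOrder A] [StarOrderedRing A]

private lemma mrcs_normal_smul (c : ℂ) (a : A) (ha : IsStarNormal a) : IsStarNormal (c • a) := by
  constructor
  unfold Commute SemiconjBy
  rw [star_smul, smul_mul_smul_comm, smul_mul_smul_comm, mul_comm c, ha.star_comm_self.eq]

private lemma mrcs_abs_eq (b : A) (hb : IsStarNormal b) :
    CFC.sqrt (star b * b) = cfc (fun z : ℂ => (‖z‖ : ℂ)) b := by
  haveI := hb
  have habs : ContinuousOn (fun z : ℂ => (‖z‖ : ℂ)) (spectrum ℂ b) :=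
    (Complex.continuous_ofReal.comp continuous_norm).continuousOn
  have hnn : 0 ≤ cfc (fun z : ℂ => (‖z‖ : ℂ)) b :=
    cfc_nonneg fun z _ => by simp [Complex.le_def]
  have hsq : cfc (fun z : ℂ => (‖z‖ : ℂ)) b * cfc (fun z : ℂ => (‖z‖ : ℂ)) b
      = star b * b := by
    rw [← cfc_mul _ _ b habs habs]
    have key : ∀ z ∈ spectrum ℂ b, (‖z‖ : ℂ) * (‖z‖ : ℂ)
        = star z * z := fun z _ => by
      rw [← Complex.ofReal_mul,
        show ‖z‖ * ‖z‖ = Complex.normSq z by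
          rw [← Complex.sq_norm]; ring,
        Complex.normSq_eq_conj_mul_self]
      rfl
    rw [cfc_congr key,
      cfc_mul (fun z : ℂ => star z) (fun z : ℂ => z) b (continuous_star.continuousOn)
        (continuous_id.continuousOn),
      cfc_star_id (R := ℂ) (a := b), cfc_id' ℂ b]
  rw [← hsq, CFC.sqrt_mul_self _ hnn]

private lemma mrcs_re_le_abs (b : A) (hb : IsStarNormal b) :
    b + star b ≤ CFC.sqrt (star b * b) + CFC.sqrt (star b * b) := by
  haveI := hb
  have habs : ContinuousOn (fun z : ℂ => (‖z‖ : ℂ)) (spectrum ℂ b) :=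
    (Complex.continuous_ofReal.comp continuous_norm).continuousOn
  rw [mrcs_abs_eq b hb]
  calc b + star b = cfc (fun z : ℂ => z + star z) b := by
        rw [cfc_add b (fun z : ℂ => z) (fun z : ℂ => star z) (continuous_id.continuousOn)
          (continuous_star.continuousOn), cfc_id' ℂ b, cfc_star_id (R := ℂ) (a := b)]
    _ ≤ cfc (fun z : ℂ => (‖z‖ : ℂ) + (‖z‖ : ℂ)) b := by
        apply cfc_mono ?_ (by exact (continuous_id.add continuous_star).continuousOn)
          (habs.add habs)
        intro z _
        show z + (starRingEnd ℂ) z ≤ _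
        rw [Complex.add_conj]; simp only [Pi.add_apply]; rw [← Complex.ofReal_add, Complex.real_le_real]
        have := Complex.re_le_norm z
        linarith
    _ = _ := cfc_add b (fun z : ℂ => (‖z‖ : ℂ)) (fun z : ℂ => (‖z‖ : ℂ))
        habs habs

private lemma mrcs_coe_smul (r : ℝ) (m : A) : (r : ℂ) • m = r • m := by
  rw [← smul_one_smul ℂ r m]; norm_num

end Aux

/-- **Multiplicative reverse Cauchy–Schwarz inequality** for a positive `A`-valued sesquilinear
form `B` on a complex linear space `X`, where `A` is a C*-algebra. Here
`CFC.sqrt (star (B x y) * B x y)` is the absolute value `|B x y|`. -/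
theorem multiplicative_reverse_cauchy_schwarz
    {A : Type*} [CStarAlgebra A] [PartialOrder A] [StarOrderedRing A]
    {X : Type*} [AddCommGroup X] [Module ℂ X]
    (B : X → X → A)
    (h_add_left : ∀ x x' y : X, B (x + x') y = B x y + B x' y)
    (h_smul_left : ∀ (c : ℂ) (x y : X), B (c • x) y = c • B x y)
    (h_add_right : ∀ x y y' : X, B x (y + y') = B x y + B x y')
    (h_smul_right : ∀ (c : ℂ) (x y : X), B x (c • y) = (starRingEnd ℂ c) • B x y)
    (h_pos : ∀ x : X, 0 ≤ B x x)
    (x y : X) (ω Ω : ℂ)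
    (h1 : star (B x y) = B y x)
    (h2 : star (B x y) * B x y = B x y * star (B x y))
    (h3 : 0 ≤ (2 : ℝ)⁻¹ • (B (Ω • y - x) (x - ω • y) + star (B (Ω • y - x) (x - ω • y))))
    (h4 : 0 < (starRingEnd ℂ ω * Ω).re) :
    CFC.sqrt (B x x) * CFC.sqrt (B y y) + CFC.sqrt (B y y) * CFC.sqrt (B x x)
      ≤ ((‖Ω‖ + ‖ω‖) / Real.sqrt ((starRingEnd ℂ ω * Ω).re))
          • CFC.sqrt (star (B x y) * B x y) := by
  set r : ℝ := (starRingEnd ℂ ω * Ω).re with hrdef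
  set S : A := CFC.sqrt (star (B x y) * B x y) with hSdef
  have hP : (0 : A) ≤ B x x := h_pos x
  have hQ : (0 : A) ≤ B y y := h_pos y
  have hPsa : star (B x x) = B x x := (IsSelfAdjoint.of_nonneg hP).star_eq
  have hQsa : star (B y y) = B y y := (IsSelfAdjoint.of_nonneg hQ).star_eq
  have h1' : star (B y x) = B x y := by rw [← h1, star_star]
  have hNa : IsStarNormal (B x y) := ⟨h2⟩
  have hNb : IsStarNormal (B y x) :=
    ⟨show star (B y x) * B y x = B y x * star (B y x) by rw [h1', ← h1]; exact h2.symm⟩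
  -- sesquilinearity for subtraction
  have hsubl : ∀ u v w : X, B (u - v) w = B u w - B v w := fun u v w => by
    rw [sub_eq_add_neg, h_add_left, show -v = (-1 : ℂ) • v by rw [neg_one_smul], h_smul_left,
      neg_one_smul, ← sub_eq_add_neg]
  have hsubr : ∀ u v w : X, B u (v - w) = B u v - B u w := fun u v w => by
    rw [sub_eq_add_neg, h_add_right, show -w = (-1 : ℂ) • w by rw [neg_one_smul], h_smul_right]
    simp [← sub_eq_add_neg]
  -- expansion of the big form
  have hE : B (Ω • y - x) (x - ω • y)
      = Ω • B y x - (starRingEnd ℂ ω * Ω) • B y y - B x x + starRingEnd ℂ ω • B x y := by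
    rw [hsubl, hsubr, hsubr, h_smul_left, h_smul_right, h_smul_right, h_smul_left, smul_smul]
    abel
  have hEstar : star (B (Ω • y - x) (x - ω • y))
      = starRingEnd ℂ Ω • B x y - (ω * starRingEnd ℂ Ω) • B y y - B x x
        + ω • B y x := by
    rw [hE]
    simp only [star_add, star_sub, star_smul, h1', hQsa, hPsa, ← h1, star_star]
    rw [show star (starRingEnd ℂ ω * Ω) = ω * starRingEnd ℂ Ω by
      simp [map_mul, Complex.star_def]]
    rw [show star (starRingEnd ℂ ω) = ω by simp [Complex.star_def]]
    rw [show star Ω = starRingEnd ℂ Ω from rfl]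
  have h5 : 0 ≤ B (Ω • y - x) (x - ω • y) + star (B (Ω • y - x) (x - ω • y)) := by
    have h := smul_le_smul_of_nonneg_left h3 (by norm_num : (0:ℝ) ≤ 2)
    simpa [smul_smul] using h
  -- the two normal summands
  have hNb1 : IsStarNormal (Ω • B y x) := mrcs_normal_smul _ _ hNb
  have hNb2 : IsStarNormal (starRingEnd ℂ ω • B x y) := mrcs_normal_smul _ _ hNa
  have hb1star : star (Ω • B y x) = starRingEnd ℂ Ω • B x y := by
    rw [star_smul, h1']; rfl
  have hb2star : star (starRingEnd ℂ ω • B x y) = ω • B y x := by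
    rw [star_smul, h1]; simp [Complex.star_def]
  -- absolute values of the summands
  have hSS : S * S = star (B x y) * B x y := by
    rw [hSdef, ← pow_two, CFC.sq_sqrt _ (star_mul_self_nonneg (B x y))]
  have hS0 : (0 : A) ≤ S := CFC.sqrt_nonneg _
  have habs1 : CFC.sqrt (star (Ω • B y x) * (Ω • B y x)) = ‖Ω‖ • S := by
    have hprod : star (Ω • B y x) * (Ω • B y x)
        = (‖Ω‖ • S) * (‖Ω‖ • S) := by
      rw [hb1star, smul_mul_smul_comm, ← h1, ← h2, smul_mul_smul_comm, hSS,
        show starRingEnd ℂ Ω * Ω = ((‖Ω‖ * ‖Ω‖ : ℝ) : ℂ) by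
          rw [show (‖Ω‖ * ‖Ω‖ : ℝ) = Complex.normSq Ω by
              rw [← Complex.sq_norm]; ring, Complex.normSq_eq_conj_mul_self],
        mrcs_coe_smul]
    rw [hprod, CFC.sqrt_mul_self _ (smul_nonneg (norm_nonneg Ω) hS0)]
  have habs2 : CFC.sqrt (star (starRingEnd ℂ ω • B x y) * (starRingEnd ℂ ω • B x y))
      = ‖ω‖ • S := by
    have hprod : star (starRingEnd ℂ ω • B x y) * (starRingEnd ℂ ω • B x y)
        = (‖ω‖ • S) * (‖ω‖ • S) := by
      rw [hb2star, smul_mul_smul_comm, smul_mul_smul_comm, hSS, ← h1,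
        show ω * starRingEnd ℂ ω = ((‖ω‖ * ‖ω‖ : ℝ) : ℂ) by
          rw [show (‖ω‖ * ‖ω‖ : ℝ) = Complex.normSq ω by
              rw [← Complex.sq_norm]; ring]
          exact (Complex.mul_conj ω).symm ▸ rfl,
        mrcs_coe_smul]
    rw [hprod, CFC.sqrt_mul_self _ (smul_nonneg (norm_nonneg ω) hS0)]
  -- rearranged sum identity
  have hcoef : ((2 * r : ℝ) : ℂ) = starRingEnd ℂ ω * Ω + ω * starRingEnd ℂ Ω := by
    rw [hrdef, ← Complex.add_conj]
    congr 1
    simp [map_mul]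
  have hsum : (B (Ω • y - x) (x - ω • y) + star (B (Ω • y - x) (x - ω • y)))
        + ((B x x + B x x) + (2 * r : ℝ) • B y y)
      = ((Ω • B y x) + star (Ω • B y x))
        + ((starRingEnd ℂ ω • B x y) + star (starRingEnd ℂ ω • B x y)) := by
    rw [hEstar, hE, hb1star, hb2star, ← mrcs_coe_smul, hcoef]
    module
  have h6 : (B x x + B x x) + (2 * r : ℝ) • B y y
      ≤ ((Ω • B y x) + star (Ω • B y x))
        + ((starRingEnd ℂ ω • B x y) + star (starRingEnd ℂ ω • B x y)) := by
    rw [← hsum]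
    exact le_add_of_nonneg_left h5
  have h7 : (B x x + B x x) + (2 * r : ℝ) • B y y
      ≤ (‖Ω‖ • S + ‖Ω‖ • S) + (‖ω‖ • S + ‖ω‖ • S) :=
    h6.trans (add_le_add
      ((mrcs_re_le_abs _ hNb1).trans_eq (by rw [habs1]))
      ((mrcs_re_le_abs _ hNb2).trans_eq (by rw [habs2])))
  have h8 : B x x + r • B y y ≤ (‖Ω‖ + ‖ω‖) • S := by
    have h := smul_le_smul_of_nonneg_left h7 (by norm_num : (0:ℝ) ≤ 2⁻¹)
    calc B x x + r • B y y
        = (2:ℝ)⁻¹ • ((B x x + B x x) + (2 * r : ℝ) • B y y) := by module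
      _ ≤ (2:ℝ)⁻¹ • ((‖Ω‖ • S + ‖Ω‖ • S)
            + (‖ω‖ • S + ‖ω‖ • S)) := h
      _ = (‖Ω‖ + ‖ω‖) • S := by module
  -- the sqrt trick
  have hrpos : 0 < Real.sqrt r := Real.sqrt_pos.mpr h4
  have hu0 : (0:A) ≤ CFC.sqrt (B x x) := CFC.sqrt_nonneg _
  have hv0 : (0:A) ≤ Real.sqrt r • CFC.sqrt (B y y) :=
    smul_nonneg hrpos.le (CFC.sqrt_nonneg _)
  have husa := (IsSelfAdjoint.of_nonneg hu0).star_eq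
  have hvsa := (IsSelfAdjoint.of_nonneg hv0).star_eq
  have huu : CFC.sqrt (B x x) * CFC.sqrt (B x x) = B x x := by
    rw [← pow_two, CFC.sq_sqrt _ hP]
  have hvv : (Real.sqrt r • CFC.sqrt (B y y)) * (Real.sqrt r • CFC.sqrt (B y y))
      = r • B y y := by
    rw [smul_mul_smul_comm, Real.mul_self_sqrt h4.le, ← pow_two, CFC.sq_sqrt _ hQ]
  have e1 : CFC.sqrt (B x x) * (Real.sqrt r • CFC.sqrt (B y y))
      = Real.sqrt r • (CFC.sqrt (B x x) * CFC.sqrt (B y y)) := mul_smul_comm _ _ _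
  have e2 : (Real.sqrt r • CFC.sqrt (B y y)) * CFC.sqrt (B x x)
      = Real.sqrt r • (CFC.sqrt (B y y) * CFC.sqrt (B x x)) := smul_mul_assoc _ _ _
  have h9 : Real.sqrt r • (CFC.sqrt (B x x) * CFC.sqrt (B y y)
        + CFC.sqrt (B y y) * CFC.sqrt (B x x)) ≤ B x x + r • B y y := by
    rw [← sub_nonneg]
    have h0 := star_mul_self_nonneg (CFC.sqrt (B x x) - Real.sqrt r • CFC.sqrt (B y y))
    rw [star_sub, husa, hvsa] at h0
    refine h0.trans_eq ?_
    rw [sub_mul, mul_sub, mul_sub, huu, hvv, e1, e2, smul_add]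
    abel
  have h10 := (h9.trans h8)
  have h11 := smul_le_smul_of_nonneg_left h10 (inv_nonneg.mpr hrpos.le)
  rw [smul_smul, inv_mul_cancel₀ hrpos.ne', one_smul, smul_smul] at h11
  rw [show (Real.sqrt r)⁻¹ * (‖Ω‖ + ‖ω‖)
    = (‖Ω‖ + ‖ω‖) / Real.sqrt r by ring] at h11
  exact h11
end

section
/- Let φ be a positive linear functional on a C*-algebra 𝔄, let x, y ∈ 𝔄 and ω, Ω ∈ ℂ be such that Re φ((x − ωy)*(Ωy − x)) ≥ 0. Then φ(x*x)φ(y*y) − |φ(y*x)|² ≤ (1/4)|Ω − ω|² φ(y*y)². -/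
open scoped ComplexOrder

lemma phi_star_apply {A : Type*} [CStarAlgebra A] [PartialOrder A] [StarOrderedRing A]
    (φ : A →ₗ[ℂ] ℂ) (hφ : ∀ a : A, 0 ≤ a → 0 ≤ φ a) (a : A) :
    φ (star a) = starRingEnd ℂ (φ a) := by
  have hpos : ∀ b : A, 0 ≤ b → φ (star b) = starRingEnd ℂ (φ b) := by
    intro b hb
    rw [(IsSelfAdjoint.of_nonneg hb).star_eq, Complex.conj_eq_iff_im.mpr]
    exact ((Complex.nonneg_iff.mp (hφ b hb)).2).symm
  open scoped ComplexStarModule in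
  conv_lhs => rw [← CStarAlgebra.linear_combination_nonneg a]
  conv_rhs => rw [← CStarAlgebra.linear_combination_nonneg a]
  simp only [star_add, star_sub, star_smul, map_add, map_sub, map_smul, Complex.star_def,
    Complex.conj_I, RingHom.id_apply, smul_eq_mul, map_mul, map_neg,
    hpos _ (CFC.posPart_nonneg _), hpos _ (CFC.negPart_nonneg _)]

/-- Additive reverse Cauchy–Schwarz inequality for a positive linear functional `φ` on a
C*-algebra `A`. -/
theorem additive_reverse_cauchy_schwarz_positive_functional
    {A : Type*} [CStarAlgebra A] [PartialOrder A] [StarOrderedRing A]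
    (φ : A →ₗ[ℂ] ℂ) (hφ : ∀ a : A, 0 ≤ a → 0 ≤ φ a)
    (x y : A) (ω Ω : ℂ)
    (h : 0 ≤ (φ (star (x - ω • y) * (Ω • y - x))).re) :
    φ (star x * x) * φ (star y * y) - (‖φ (star y * x)‖ : ℂ) ^ 2
      ≤ (1 / 4 : ℂ) * (‖Ω - ω‖ : ℂ) ^ 2 * φ (star y * y) ^ 2 := by
  have ha := Complex.nonneg_iff.mp (hφ _ (star_mul_self_nonneg x))
  have hb := Complex.nonneg_iff.mp (hφ _ (star_mul_self_nonneg y))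
  have hconj : φ (star x * y) = starRingEnd ℂ (φ (star y * x)) := by
    have := phi_star_apply φ hφ (star y * x)
    rwa [star_mul, star_star] at this
  have halg : star (x - ω • y) * (Ω • y - x) =
      Ω • (star x * y) - star x * x - ((starRingEnd ℂ) ω * Ω) • (star y * y)
        + (starRingEnd ℂ) ω • (star y * x) := by
    rw [star_sub, star_smul, sub_mul, mul_sub, mul_sub, Complex.star_def]
    rw [smul_mul_assoc, smul_mul_assoc, mul_smul_comm, mul_smul_comm, smul_smul]
    abel
  rw [halg, map_add, map_sub, map_sub, map_smul, map_smul, map_smul, hconj] at h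
  set c := φ (star y * x) with hc
  set a := (φ (star x * x)).re with hadef
  set b := (φ (star y * y)).re with hbdef
  have hA : φ (star x * x) = (a : ℂ) := Complex.ext rfl (by simp [← ha.2])
  have hB : φ (star y * y) = (b : ℂ) := Complex.ext rfl (by simp [← hb.2])
  rw [hA, hB] at h ⊢
  have hcabs : ‖c‖ ^ 2 = c.re ^ 2 + c.im ^ 2 := by
    rw [Complex.sq_norm, Complex.normSq_apply]; ring
  have habs : ‖Ω - ω‖ ^ 2 = (Ω.re - ω.re) ^ 2 + (Ω.im - ω.im) ^ 2 := by
    rw [Complex.sq_norm, Complex.normSq_apply]; simp; ring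
  simp only [smul_eq_mul, Complex.add_re, Complex.sub_re, Complex.mul_re, Complex.mul_im,
    Complex.conj_re, Complex.conj_im, Complex.ofReal_re, Complex.ofReal_im,
    mul_zero, zero_mul, sub_zero, neg_zero, add_zero, zero_add, mul_neg, neg_neg, neg_mul] at h
  have key : a * b - ‖c‖ ^ 2 ≤ 1 / 4 * ‖Ω - ω‖ ^ 2 * b ^ 2 := by
    rw [hcabs, habs]
    nlinarith [mul_le_mul_of_nonneg_right h hb.1, sq_nonneg (2 * c.re - (Ω.re + ω.re) * b),
      sq_nonneg (2 * c.im - (Ω.im + ω.im) * b), hb.1, ha.1]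
  rw [show (1 / 4 : ℂ) = ((1 / 4 : ℝ) : ℂ) by norm_num]
  exact_mod_cast key
end

section
/- Let φ be a positive linear functional on a C*-algebra 𝔄, let ω, Ω ∈ ℂ, and let y, z ∈ 𝔄 satisfy φ(y*y) = 1, φ(z*z) = 1, and φ(z*y) = 0. Set x := ((Ω + ω)/2)y + ((Ω − ω)/2)z. Then Re φ((x − ωy)*(Ωy − x)) = 0 (in particular Re φ((x − ωy)*(Ωy − x)) ≥ 0) and φ(x*x)φ(y*y) − |φ(y*x)|² = (1/4)|Ω − ω|² φ(y*y)². Consequently, if C ≥ 0 is a constant such that φ(x*x)φ(y*y) − |φ(y*x)|² ≤ C|Ω − ω|² φ(y*y)² holds for this pair x, y, then 1/4 ≤ C provided Ω ≠ ω. -/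
open scoped ComplexOrder

lemma herm_aux {A : Type*} [NonUnitalRing A] [StarRing A] [Module ℂ A] [StarModule ℂ A]
    [SMulCommClass ℂ A A] [IsScalarTower ℂ A A]
    (φ : A →ₗ[ℂ] ℂ) (him : ∀ c : A, (φ (star c * c)).im = 0) (a b : A) :
    φ (star b * a) = star (φ (star a * b)) := by
  have h1 := him (a + b)
  have h2 := him (a + (Complex.I) • b)
  simp only [star_add, add_mul, mul_add, map_add, Complex.add_im, star_smul, smul_mul_assoc,
    mul_smul_comm, neg_mul, map_neg, map_smul, Complex.star_def, Complex.conj_I, neg_smul,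
    smul_smul, Complex.smul_im, Complex.neg_im, Complex.I_re, Complex.I_im, him a, him b,
    smul_eq_mul, Complex.mul_im, Complex.mul_re, Complex.neg_re] at h1 h2
  apply Complex.ext <;> simp [Complex.conj_re, Complex.conj_im] <;> nlinarith [h1, h2]

/-- Sharpness of the constant `1/4` in the additive reverse Cauchy–Schwarz inequality for
positive linear functionals on a C*-algebra. -/
theorem sharpness_additive_reverse_cauchy_schwarz
    {A : Type*} [CStarAlgebra A] [PartialOrder A] [StarOrderedRing A]
    (φ : A →ₗ[ℂ] ℂ) (hφ : ∀ a : A, 0 ≤ a → 0 ≤ φ a)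
    (ω Ω : ℂ) (y z x : A)
    (hy : φ (star y * y) = 1) (hz : φ (star z * z) = 1) (hzy : φ (star z * y) = 0)
    (hx : x = ((Ω + ω) / 2) • y + ((Ω - ω) / 2) • z) :
    (φ (star (x - ω • y) * (Ω • y - x))).re = 0 ∧
    φ (star x * x) * φ (star y * y) - (‖φ (star y * x)‖ : ℂ) ^ 2
        = (1 / 4 : ℂ) * (‖Ω - ω‖ : ℂ) ^ 2 * φ (star y * y) ^ 2 ∧
    ∀ C : ℝ, 0 ≤ C →
      φ (star x * x) * φ (star y * y) - (‖φ (star y * x)‖ : ℂ) ^ 2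
          ≤ (C : ℂ) * (‖Ω - ω‖ : ℂ) ^ 2 * φ (star y * y) ^ 2 →
      Ω ≠ ω → 1 / 4 ≤ C := by
  have him : ∀ c : A, (φ (star c * c)).im = 0 := fun c =>
    ((Complex.le_def.mp (hφ _ (star_mul_self_nonneg c))).2).symm
  have hyz : φ (star y * z) = 0 := by
    rw [herm_aux φ him z y, hzy, star_zero]
  set α : ℂ := (Ω + ω) / 2 with hα
  set β : ℂ := (Ω - ω) / 2 with hβ
  have expand : ∀ a b : ℂ, φ (star (a • y + b • z) * (a • y + b • z))
      = star a * a + star b * b := by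
    intro a b
    simp only [star_add, star_smul, add_mul, mul_add, smul_mul_assoc, mul_smul_comm,
      map_add, map_smul, smul_smul, hy, hz, hzy, hyz, smul_eq_mul]
    ring
  have hφxx : φ (star x * x) = star α * α + star β * β := by rw [hx]; exact expand α β
  have hφyx : φ (star y * x) = α := by
    rw [hx]
    simp only [mul_add, mul_smul_comm, map_add, map_smul, hy, hyz, smul_eq_mul]
    ring
  have habs : ∀ w : ℂ, ((‖w‖ : ℂ)) ^ 2 = star w * w := by
    intro w
    rw [← Complex.ofReal_pow, Complex.sq_norm, Complex.star_def,
      Complex.normSq_eq_conj_mul_self]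
  have key : φ (star x * x) * φ (star y * y) - (‖φ (star y * x)‖ : ℂ) ^ 2
      = (1 / 4 : ℂ) * (‖Ω - ω‖ : ℂ) ^ 2 * φ (star y * y) ^ 2 := by
    rw [hφxx, hφyx, hy, habs, habs, hα, hβ]
    simp only [Complex.star_def, map_div₀, map_add, map_sub, map_mul, map_ofNat]
    ring
  refine ⟨?_, key, ?_⟩
  · have h1 : x - ω • y = β • y + β • z := by
      rw [hx, hα, hβ]; module
    have h2 : Ω • y - x = β • y + (-β) • z := by
      rw [hx, hα, hβ]; module
    have h0 : φ (star (x - ω • y) * (Ω • y - x)) = 0 := by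
      rw [h1, h2]
      simp only [star_add, star_smul, add_mul, mul_add, smul_mul_assoc, mul_smul_comm,
        map_add, map_smul, smul_smul, hy, hz, hzy, hyz, smul_eq_mul, Complex.star_def,
        map_div₀, map_add, map_sub, map_mul, map_neg, map_ofNat]
      ring
    rw [h0, Complex.zero_re]
  · intro C hC hle hne
    rw [key, hy, one_pow, mul_one, mul_one] at hle
    have hd : (0:ℝ) < ‖Ω - ω‖ ^ 2 :=
      pow_pos (norm_pos_iff.mpr (sub_ne_zero.mpr hne)) 2
    have hle' : (1/4 : ℝ) * ‖Ω - ω‖^2 ≤ C * ‖Ω - ω‖^2 := by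
      rw [← Complex.real_le_real]
      push_cast
      exact hle
    nlinarith [hle', hd]
end

section
/- Let φ be a positive linear functional on a C*-algebra 𝔄, let x, y ∈ 𝔄 and ω, Ω ∈ ℂ be such that Re φ((x − ωy)*(Ωy − x)) ≥ 0 and Re(ω̄Ω) > 0. Then φ(x*x)^{1/2} φ(y*y)^{1/2} ≤ (1/2) · ((|Ω| + |ω|)/√(Re(ω̄Ω))) · |φ(y*x)|. -/
open scoped ComplexOrder

lemma aux_real_of_sa {A : Type*} [CStarAlgebra A] [PartialOrder A] [StarOrderedRing A]
    (φ : A →ₗ[ℂ] ℂ) (hφ : ∀ a : A, 0 ≤ a → 0 ≤ φ a)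
    (a : A) (ha : IsSelfAdjoint a) : (φ a).im = 0 := by
  have h1 : 0 ≤ φ a⁺ := hφ _ (CFC.posPart_nonneg a)
  have h2 : 0 ≤ φ a⁻ := hφ _ (CFC.negPart_nonneg a)
  rw [Complex.nonneg_iff] at h1 h2
  rw [← CFC.posPart_sub_negPart a ha, map_sub, Complex.sub_im, ← h1.2, ← h2.2, sub_zero]

lemma aux_map_star {A : Type*} [CStarAlgebra A] [PartialOrder A] [StarOrderedRing A]
    (φ : A →ₗ[ℂ] ℂ) (hφ : ∀ a : A, 0 ≤ a → 0 ≤ φ a)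
    (a : A) : φ (star a) = (starRingEnd ℂ) (φ a) := by
  have hb : IsSelfAdjoint (a + star a) := by
    rw [IsSelfAdjoint, star_add, star_star, add_comm]
  have hc : IsSelfAdjoint (Complex.I • (star a - a)) := by
    rw [IsSelfAdjoint, star_smul, star_sub, star_star, Complex.star_def, Complex.conj_I,
      neg_smul, ← smul_neg, neg_sub]
  have h1 := aux_real_of_sa φ hφ _ hb
  have h2 := aux_real_of_sa φ hφ _ hc
  rw [map_add] at h1
  rw [map_smul, map_sub] at h2
  apply Complex.ext <;>
    simp only [smul_eq_mul, Complex.mul_im, Complex.mul_re, Complex.add_im, Complex.sub_im,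
      Complex.sub_re, Complex.I_re, Complex.I_im, Complex.conj_re, Complex.conj_im] at * <;>
    linarith

/-- Multiplicative reverse Cauchy–Schwarz inequality for a positive linear functional `φ` on a
C*-algebra `A`. -/
theorem multiplicative_reverse_cauchy_schwarz_positive_functional
    {A : Type*} [CStarAlgebra A] [PartialOrder A] [StarOrderedRing A]
    (φ : A →ₗ[ℂ] ℂ) (hφ : ∀ a : A, 0 ≤ a → 0 ≤ φ a)
    (x y : A) (ω Ω : ℂ)
    (h : 0 ≤ (φ (star (x - ω • y) * (Ω • y - x))).re)
    (hωΩ : 0 < (starRingEnd ℂ ω * Ω).re) :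
    Real.sqrt (φ (star x * x)).re * Real.sqrt (φ (star y * y)).re
      ≤ 1 / 2 * ((‖Ω‖ + ‖ω‖) / Real.sqrt ((starRingEnd ℂ ω * Ω).re))
          * ‖φ (star y * x)‖ := by
  set p := φ (star x * x) with hp
  set q := φ (star y * y) with hq
  set m := φ (star y * x) with hm
  have hxpos : 0 ≤ p := hφ _ (star_mul_self_nonneg x)
  have hypos : 0 ≤ q := hφ _ (star_mul_self_nonneg y)
  rw [Complex.nonneg_iff] at hxpos hypos
  set r := ((starRingEnd ℂ) ω * Ω).re with hr
  set c := ‖Ω‖ + ‖ω‖ with hc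
  -- expand h
  have hexp : star (x - ω • y) * (Ω • y - x)
      = Ω • (star x * y) - star x * x - ((starRingEnd ℂ) ω * Ω) • (star y * y)
        + (starRingEnd ℂ) ω • (star y * x) := by
    rw [star_sub, star_smul, Complex.star_def, sub_mul, mul_sub, mul_sub,
      mul_smul_comm, smul_mul_assoc, smul_mul_assoc, mul_smul_comm, smul_smul]
    abel
  rw [hexp, map_add, map_sub, map_sub, map_smul, map_smul, map_smul] at h
  have hxy : φ (star x * y) = (starRingEnd ℂ) m := by
    rw [hm, ← aux_map_star φ hφ, star_mul, star_star]
  rw [hxy] at h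
  simp only [smul_eq_mul, Complex.add_re, Complex.sub_re, ← hp, ← hq, ← hm] at h
  -- bound the cross terms
  have h1 : (Ω * (starRingEnd ℂ) m).re ≤ ‖Ω‖ * ‖m‖ :=
    (Complex.re_le_norm _).trans (by rw [norm_mul, Complex.norm_conj])
  have h2 : ((starRingEnd ℂ) ω * m).re ≤ ‖ω‖ * ‖m‖ :=
    (Complex.re_le_norm _).trans (by rw [norm_mul, Complex.norm_conj])
  have hqr : ((starRingEnd ℂ) ω * Ω * q).re = r * q.re := by
    rw [Complex.mul_re, ← hypos.2, mul_zero, sub_zero, hr]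
  rw [hqr] at h
  have hmain : p.re + r * q.re ≤ c * ‖m‖ := by
    rw [hc, add_mul]; linarith
  -- AM-GM
  have hA : (0:ℝ) ≤ p.re := hxpos.1
  have hB : (0:ℝ) ≤ q.re := hypos.1
  have hrB : (0:ℝ) ≤ r * q.re := mul_nonneg hωΩ.le hB
  have hsr : 0 < Real.sqrt r := Real.sqrt_pos.mpr hωΩ
  have hsplit : Real.sqrt (r * q.re) = Real.sqrt r * Real.sqrt q.re := Real.sqrt_mul hωΩ.le _
  have key : 2 * Real.sqrt r * (Real.sqrt p.re * Real.sqrt q.re) ≤ c * ‖m‖ := by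
    nlinarith [sq_nonneg (Real.sqrt p.re - Real.sqrt (r * q.re)), Real.sq_sqrt hA,
      Real.sq_sqrt hrB, hsplit, Real.sqrt_nonneg p.re, Real.sqrt_nonneg (r * q.re)]
  calc Real.sqrt p.re * Real.sqrt q.re
      = (2 * Real.sqrt r * (Real.sqrt p.re * Real.sqrt q.re)) / (2 * Real.sqrt r) := by
        field_simp
    _ ≤ (c * ‖m‖) / (2 * Real.sqrt r) := by
        exact div_le_div_of_nonneg_right key (by positivity)
    _ = 1 / 2 * (c / Real.sqrt r) * ‖m‖ := by
        field_simp
end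

section
/- Let ℋ be a complex Hilbert space and T, S ∈ 𝔅(ℋ) strictly positive bounded operators with TS = ST. Then for all x ∈ ℋ: ‖Tx‖²‖Sx‖² − |⟨Tx, Sx⟩|² ≤ ((sup σ(T) sup σ(S) − inf σ(T) inf σ(S))/2)² · min{ ‖Sx‖⁴/(sup σ(S)² inf σ(S)²), ‖Tx‖⁴/(sup σ(T)² inf σ(T)²) }. -/
open Polynomial in
lemma my_commute_cfc {A : Type*} [CStarAlgebra A] {a b : A} (ha : IsSelfAdjoint a)
    (hab : Commute a b) (f : ℝ → ℝ) : Commute (cfc f a) b := by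
  by_cases hf : ContinuousOn f (spectrum ℝ a)
  · rw [cfc_apply f a ha hf]
    let Φ := cfcHom (R := ℝ) ha
    let S : Subalgebra ℝ C(spectrum ℝ a, ℝ) :=
      (Subalgebra.centralizer ℝ ({b} : Set A)).comap (Φ : C(spectrum ℝ a, ℝ) →ₐ[ℝ] A)
    have hmem : ∀ g : C(spectrum ℝ a, ℝ), g ∈ S ↔ Commute b (Φ g) := by
      intro g
      simp only [S, Subalgebra.mem_comap, Subalgebra.mem_centralizer_iff,
        Set.mem_singleton_iff, forall_eq]
      exact Iff.rfl
    have hclosed : IsClosed (S : Set C(spectrum ℝ a, ℝ)) := by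
      have hΦ : Continuous Φ := (cfcHom_isClosedEmbedding (R := ℝ) ha).continuous
      have hcont : Continuous (fun g : C(spectrum ℝ a, ℝ) => b * Φ g - Φ g * b) := by
        fun_prop
      have : (S : Set C(spectrum ℝ a, ℝ))
          = (fun g : C(spectrum ℝ a, ℝ) => b * Φ g - Φ g * b) ⁻¹' {0} := by
        ext g
        simp only [Set.mem_preimage, Set.mem_singleton_iff, sub_eq_zero, SetLike.mem_coe, hmem]
        exact Iff.rfl
      rw [this]
      exact (isClosed_singleton).preimage hcont
    have hX : polynomialFunctions (spectrum ℝ a) ≤ S := by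
      rw [polynomialFunctions.eq_adjoin_X]
      apply Algebra.adjoin_le
      rintro g hg
      rw [Set.mem_singleton_iff] at hg
      subst hg
      rw [SetLike.mem_coe, hmem]
      have : (toContinuousMapOnAlgHom (spectrum ℝ a) X : C(spectrum ℝ a, ℝ))
          = ContinuousMap.restrict (spectrum ℝ a) (ContinuousMap.id ℝ) := by
        ext z; simp
      rw [this]
      simpa only [Φ, cfcHom_id ha] using hab.symm
    have htop : ∀ g : C(spectrum ℝ a, ℝ), g ∈ S := by
      intro g
      have h1 := polynomialFunctions.topologicalClosure (spectrum ℝ a)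
      have h2 := Subalgebra.topologicalClosure_minimal hX hclosed
      rw [h1] at h2
      exact h2 (by trivial)
    exact ((hmem _).mp (htop _)).symm
  · rw [cfc_apply_of_not_continuousOn a hf]
    exact Commute.zero_left b

lemma my_mul_nonneg {A : Type*} [CStarAlgebra A] [PartialOrder A] [StarOrderedRing A]
    {a b : A} (ha : 0 ≤ a) (hb : 0 ≤ b) (hab : Commute a b) : 0 ≤ a * b := by
  have ha' : IsSelfAdjoint a := IsSelfAdjoint.of_nonneg ha
  set s := cfc Real.sqrt a with hs
  have hs_sa : IsSelfAdjoint s := cfc_predicate _ a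
  have hss : s * s = a := by
    rw [hs, ← cfc_mul _ _ a]
    conv_rhs => rw [← cfc_id ℝ a]
    exact cfc_congr fun y hy => Real.mul_self_sqrt (spectrum_nonneg_of_nonneg ha hy)
  have hcomm : Commute s b := my_commute_cfc ha' hab Real.sqrt
  calc (0 : A) ≤ star s * b * s := star_left_conjugate_nonneg hb s
    _ = a * b := by rw [hs_sa.star_eq, mul_assoc, ← hcomm.eq, ← mul_assoc, hss]

section helpers

variable {H : Type*} [NormedAddCommGroup H] [InnerProductSpace ℂ H] [CompleteSpace H]

lemma my_algebraMap_apply (r : ℝ) (y : H) :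
    (algebraMap ℝ (H →L[ℂ] H) r) y = (r : ℂ) • y := by
  rw [IsScalarTower.algebraMap_apply ℝ ℂ (H →L[ℂ] H), Algebra.algebraMap_eq_smul_one]
  simp

lemma my_op_le_iff (R : H →L[ℂ] H) (hR : IsSelfAdjoint R) (r : ℝ) :
    algebraMap ℝ (H →L[ℂ] H) r ≤ R ↔ ∀ y : H, r * ‖y‖ ^ 2 ≤ (inner ℂ (R y) y : ℂ).re := by
  rw [ContinuousLinearMap.le_def]
  constructor
  · intro h y
    have h1 := h.re_inner_nonneg_left y
    rw [ContinuousLinearMap.sub_apply, my_algebraMap_apply, inner_sub_left, inner_smul_left,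
      Complex.conj_ofReal] at h1
    simp only [RCLike.re_to_complex, Complex.sub_re, Complex.mul_re, Complex.ofReal_re,
      Complex.ofReal_im, zero_mul, sub_zero] at h1
    have h2 : (inner ℂ y y : ℂ).re = ‖y‖ ^ 2 := by
      rw [← RCLike.re_to_complex]; exact inner_self_eq_norm_sq y
    rw [h2] at h1
    linarith
  · intro h
    refine ⟨by rw [← ContinuousLinearMap.isSelfAdjoint_iff_isSymmetric]; exact hR.sub (IsSelfAdjoint.algebraMap _ (by simp [IsSelfAdjoint])), fun y => ?_⟩
    have h1 := h y
    show (0:ℝ) ≤ RCLike.re (inner ℂ ((R - algebraMap ℝ (H →L[ℂ] H) r) y) y : ℂ)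
    rw [ContinuousLinearMap.sub_apply, my_algebraMap_apply, inner_sub_left, inner_smul_left,
      Complex.conj_ofReal]
    simp only [RCLike.re_to_complex, Complex.sub_re, Complex.mul_re, Complex.ofReal_re,
      Complex.ofReal_im, zero_mul, sub_zero]
    have h2 : (inner ℂ y y : ℂ).re = ‖y‖ ^ 2 := by
      rw [← RCLike.re_to_complex]; exact inner_self_eq_norm_sq y
    rw [h2]
    linarith

lemma my_le_op_iff (R : H →L[ℂ] H) (hR : IsSelfAdjoint R) (r : ℝ) :
    R ≤ algebraMap ℝ (H →L[ℂ] H) r ↔ ∀ y : H, (inner ℂ (R y) y : ℂ).re ≤ r * ‖y‖ ^ 2 := by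
  rw [ContinuousLinearMap.le_def]
  constructor
  · intro h y
    have h1 := h.re_inner_nonneg_left y
    rw [ContinuousLinearMap.sub_apply, my_algebraMap_apply, inner_sub_left, inner_smul_left,
      Complex.conj_ofReal] at h1
    simp only [RCLike.re_to_complex, Complex.sub_re, Complex.mul_re, Complex.ofReal_re,
      Complex.ofReal_im, zero_mul, sub_zero] at h1
    have h2 : (inner ℂ y y : ℂ).re = ‖y‖ ^ 2 := by
      rw [← RCLike.re_to_complex]; exact inner_self_eq_norm_sq y
    rw [h2] at h1
    linarith
  · intro h
    refine ⟨by rw [← ContinuousLinearMap.isSelfAdjoint_iff_isSymmetric]; exact (IsSelfAdjoint.algebraMap _ (by simp [IsSelfAdjoint])).sub hR, fun y => ?_⟩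
    have h1 := h y
    show (0:ℝ) ≤ RCLike.re (inner ℂ ((algebraMap ℝ (H →L[ℂ] H) r - R) y) y : ℂ)
    rw [ContinuousLinearMap.sub_apply, my_algebraMap_apply, inner_sub_left, inner_smul_left,
      Complex.conj_ofReal]
    simp only [RCLike.re_to_complex, Complex.sub_re, Complex.mul_re, Complex.ofReal_re,
      Complex.ofReal_im, zero_mul, sub_zero]
    have h2 : (inner ℂ y y : ℂ).re = ‖y‖ ^ 2 := by
      rw [← RCLike.re_to_complex]; exact inner_self_eq_norm_sq y
    rw [h2]
    linarith

end helpers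

lemma my_key_real {α β γ a b c : ℝ} (hα : 0 < α) (hβ : 0 < β) (hγ : 0 < γ)
    (ha : 0 ≤ a) (hb : 0 ≤ b) (h : α * a + β * b ≤ γ * c) :
    a * b - c ^ 2 ≤ (γ ^ 2 - 4 * α * β) / (4 * α ^ 2) * b ^ 2 := by
  rw [div_mul_eq_mul_div, le_div_iff₀ (by positivity)]
  have h1 : 0 ≤ γ * c - (α * a + β * b) := by linarith
  have h2 : 0 ≤ γ * c + (α * a + β * b) := by nlinarith
  nlinarith [sq_nonneg (2*α^2*a - (γ^2 - 2*α*β)*b), mul_nonneg h1 h2, mul_pos hγ hγ,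
    mul_pos hα hα, sq_nonneg (γ*c), mul_nonneg (mul_nonneg hα.le ha) hb]

/-- Additive reverse Cauchy–Schwarz inequality for commuting strictly positive bounded
operators `T, S` on a complex Hilbert space. -/
theorem operator_additive_reverse_cauchy_schwarz
    {H : Type*} [NormedAddCommGroup H] [InnerProductSpace ℂ H] [CompleteSpace H]
    (T S : H →L[ℂ] H)
    (hT : IsSelfAdjoint T) (hS : IsSelfAdjoint S)
    (hT' : ∃ ε : ℝ, 0 < ε ∧ ∀ x : H, ε * ‖x‖ ^ 2 ≤ (inner ℂ (T x) x : ℂ).re)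
    (hS' : ∃ ε : ℝ, 0 < ε ∧ ∀ x : H, ε * ‖x‖ ^ 2 ≤ (inner ℂ (S x) x : ℂ).re)
    (hTS : T * S = S * T) (x : H) :
    ‖T x‖ ^ 2 * ‖S x‖ ^ 2 - ‖(inner ℂ (T x) (S x) : ℂ)‖ ^ 2
      ≤ ((sSup (spectrum ℝ T) * sSup (spectrum ℝ S)
            - sInf (spectrum ℝ T) * sInf (spectrum ℝ S)) / 2) ^ 2
        * min (‖S x‖ ^ 4 / (sSup (spectrum ℝ S) ^ 2 * sInf (spectrum ℝ S) ^ 2))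
              (‖T x‖ ^ 4 / (sSup (spectrum ℝ T) ^ 2 * sInf (spectrum ℝ T) ^ 2)) := by
  rcases subsingleton_or_nontrivial H with hH | hH
  · have hx : x = 0 := Subsingleton.elim x 0
    simp [hx]
  obtain ⟨εT, hεT, hεT'⟩ := hT'
  obtain ⟨εS, hεS, hεS'⟩ := hS'
  haveI : Nontrivial (H →L[ℂ] H) := by
    obtain ⟨y, hy⟩ := exists_ne (0 : H)
    exact ⟨1, 0, fun h => hy (by simpa using DFunLike.congr_fun h y)⟩
  set mT := sInf (spectrum ℝ T) with hmT
  set MT := sSup (spectrum ℝ T) with hMT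
  set mS := sInf (spectrum ℝ S) with hmS
  set MS := sSup (spectrum ℝ S) with hMS
  have hcT : IsCompact (spectrum ℝ T) := isCompact_iff_compactSpace.mpr inferInstance
  have hcS : IsCompact (spectrum ℝ S) := isCompact_iff_compactSpace.mpr inferInstance
  have hneT : (spectrum ℝ T).Nonempty := CFC.spectrum_nonempty ℝ T hT
  have hneS : (spectrum ℝ S).Nonempty := CFC.spectrum_nonempty ℝ S hS
  -- positivity of spectral bounds
  have hspecT : ∀ μ ∈ spectrum ℝ T, εT ≤ μ :=
    (algebraMap_le_iff_le_spectrum hT).mp ((my_op_le_iff T hT εT).mpr hεT')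
  have hspecS : ∀ μ ∈ spectrum ℝ S, εS ≤ μ :=
    (algebraMap_le_iff_le_spectrum hS).mp ((my_op_le_iff S hS εS).mpr hεS')
  have hmT_pos : 0 < mT := lt_of_lt_of_le hεT (le_csInf hneT hspecT)
  have hmS_pos : 0 < mS := lt_of_lt_of_le hεS (le_csInf hneS hspecS)
  have hmT_le : ∀ μ ∈ spectrum ℝ T, mT ≤ μ := fun μ hμ => csInf_le hcT.bddBelow hμ
  have hmS_le : ∀ μ ∈ spectrum ℝ S, mS ≤ μ := fun μ hμ => csInf_le hcS.bddBelow hμ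
  have hMT_ge : ∀ μ ∈ spectrum ℝ T, μ ≤ MT := fun μ hμ => le_csSup hcT.bddAbove hμ
  have hMS_ge : ∀ μ ∈ spectrum ℝ S, μ ≤ MS := fun μ hμ => le_csSup hcS.bddAbove hμ
  have hMT_pos : 0 < MT := by
    obtain ⟨μ, hμ⟩ := hneT
    exact lt_of_lt_of_le hmT_pos (le_trans (hmT_le μ hμ) (hMT_ge μ hμ))
  have hMS_pos : 0 < MS := by
    obtain ⟨μ, hμ⟩ := hneS
    exact lt_of_lt_of_le hmS_pos (le_trans (hmS_le μ hμ) (hMS_ge μ hμ))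
  -- scalar two-sided bounds
  have hTm : ∀ y : H, mT * ‖y‖ ^ 2 ≤ (inner ℂ (T y) y : ℂ).re :=
    (my_op_le_iff T hT mT).mp (algebraMap_le_of_le_spectrum hmT_le hT)
  have hSm : ∀ y : H, mS * ‖y‖ ^ 2 ≤ (inner ℂ (S y) y : ℂ).re :=
    (my_op_le_iff S hS mS).mp (algebraMap_le_of_le_spectrum hmS_le hS)
  have hTM : ∀ y : H, (inner ℂ (T y) y : ℂ).re ≤ MT * ‖y‖ ^ 2 :=
    (my_le_op_iff T hT MT).mp (le_algebraMap_of_spectrum_le hMT_ge hT)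
  have hSM : ∀ y : H, (inner ℂ (S y) y : ℂ).re ≤ MS * ‖y‖ ^ 2 :=
    (my_le_op_iff S hS MS).mp (le_algebraMap_of_spectrum_le hMS_ge hS)
  -- the two auxiliary operators
  set B := (MS : ℂ) • T - (mT : ℂ) • S with hB
  set C := (MT : ℂ) • S - (mS : ℂ) • T with hC
  have hsaR : ∀ r : ℝ, IsSelfAdjoint (r : ℂ) := fun r => Complex.conj_ofReal r
  have hBsa : IsSelfAdjoint B := ((hsaR MS).smul hT).sub ((hsaR mT).smul hS)
  have hCsa : IsSelfAdjoint C := ((hsaR MT).smul hS).sub ((hsaR mS).smul hT)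
  -- real part expansion helper
  have hre2 : ∀ (p q : ℝ) (u v w : H),
      (inner ℂ ((p:ℂ) • u - (q:ℂ) • v) w : ℂ).re
        = p * (inner ℂ u w : ℂ).re - q * (inner ℂ v w : ℂ).re := by
    intro p q u v w
    rw [inner_sub_left, inner_smul_left, inner_smul_left, Complex.conj_ofReal,
      Complex.conj_ofReal]
    simp [Complex.sub_re, Complex.mul_re]
  have hself : ∀ y : H, (inner ℂ y y : ℂ).re = ‖y‖ ^ 2 := fun y => by
    rw [← RCLike.re_to_complex]; exact inner_self_eq_norm_sq y
  have hB_pos : (0 : H →L[ℂ] H) ≤ B := by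
    rw [ContinuousLinearMap.nonneg_iff_isPositive]
    refine ⟨by rw [← ContinuousLinearMap.isSelfAdjoint_iff_isSymmetric]; exact hBsa, fun y => ?_⟩
    show (0:ℝ) ≤ RCLike.re (inner ℂ (B y) y : ℂ)
    rw [RCLike.re_to_complex, hB, ContinuousLinearMap.sub_apply, ContinuousLinearMap.smul_apply,
      ContinuousLinearMap.smul_apply, hre2]
    nlinarith [hTm y, hSM y, mul_le_mul_of_nonneg_left (hTm y) hMS_pos.le,
      mul_le_mul_of_nonneg_left (hSM y) hmT_pos.le]
  have hC_pos : (0 : H →L[ℂ] H) ≤ C := by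
    rw [ContinuousLinearMap.nonneg_iff_isPositive]
    refine ⟨by rw [← ContinuousLinearMap.isSelfAdjoint_iff_isSymmetric]; exact hCsa, fun y => ?_⟩
    show (0:ℝ) ≤ RCLike.re (inner ℂ (C y) y : ℂ)
    rw [RCLike.re_to_complex, hC, ContinuousLinearMap.sub_apply, ContinuousLinearMap.smul_apply,
      ContinuousLinearMap.smul_apply, hre2]
    nlinarith [hSm y, hTM y, mul_le_mul_of_nonneg_left (hSm y) hMT_pos.le,
      mul_le_mul_of_nonneg_left (hTM y) hmS_pos.le]
  have hcommTS : Commute T S := hTS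
  have hcommBC : Commute B C := by
    apply Commute.sub_left
    · apply Commute.sub_right
      · exact (hcommTS.smul_left _).smul_right _
      · exact ((Commute.refl T).smul_left _).smul_right _
    · apply Commute.sub_right
      · exact ((Commute.refl S).smul_left _).smul_right _
      · exact (hcommTS.symm.smul_left _).smul_right _
  have hBC : (0 : H →L[ℂ] H) ≤ B * C := my_mul_nonneg hB_pos hC_pos hcommBC
  have hBCpos : (B * C).IsPositive := (ContinuousLinearMap.nonneg_iff_isPositive _).mp hBC
  -- the star inequality
  have hstar : (0:ℝ) ≤ (inner ℂ (C x) (B x) : ℂ).re := by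
    have h := hBCpos.re_inner_nonneg_left x
    rwa [ContinuousLinearMap.mul_apply, ← ContinuousLinearMap.isSelfAdjoint_iff'.mp hBsa,
      ContinuousLinearMap.adjoint_inner_left, RCLike.re_to_complex] at h
  have hcsymm : (inner ℂ (S x) (T x) : ℂ).re = (inner ℂ (T x) (S x) : ℂ).re := by
    rw [← RCLike.re_to_complex, ← RCLike.re_to_complex]
    exact inner_re_symm _ _
  have hexp : (inner ℂ (C x) (B x) : ℂ).re
      = (MT * MS + mS * mT) * (inner ℂ (T x) (S x) : ℂ).re
        - MT * mT * ‖S x‖ ^ 2 - mS * MS * ‖T x‖ ^ 2 := by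
    rw [hC, hB, ContinuousLinearMap.sub_apply, ContinuousLinearMap.sub_apply,
      ContinuousLinearMap.smul_apply, ContinuousLinearMap.smul_apply,
      ContinuousLinearMap.smul_apply, ContinuousLinearMap.smul_apply, hre2]
    rw [inner_sub_right, inner_sub_right, inner_smul_right, inner_smul_right,
      inner_smul_right, inner_smul_right]
    simp only [Complex.sub_re, Complex.mul_re, Complex.ofReal_re, Complex.ofReal_im, zero_mul,
      sub_zero]
    rw [hself (S x), hself (T x), hcsymm]
    ring
  have hstar' : mS * MS * ‖T x‖ ^ 2 + mT * MT * ‖S x‖ ^ 2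
      ≤ (MT * MS + mS * mT) * (inner ℂ (T x) (S x) : ℂ).re := by
    rw [hexp] at hstar; linarith
  have habs : (inner ℂ (T x) (S x) : ℂ).re ^ 2 ≤ ‖(inner ℂ (T x) (S x) : ℂ)‖ ^ 2 := by
    rw [Complex.sq_norm, Complex.normSq_apply]
    nlinarith [sq_nonneg ((inner ℂ (T x) (S x) : ℂ).im)]
  have hγ : 0 < MT * MS + mS * mT := by positivity
  have ha0 : (0:ℝ) ≤ ‖T x‖ ^ 2 := by positivity
  have hb0 : (0:ℝ) ≤ ‖S x‖ ^ 2 := by positivity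
  refine le_trans (by linarith : ‖T x‖ ^ 2 * ‖S x‖ ^ 2
      - ‖(inner ℂ (T x) (S x) : ℂ)‖ ^ 2
      ≤ ‖T x‖ ^ 2 * ‖S x‖ ^ 2 - (inner ℂ (T x) (S x) : ℂ).re ^ 2) ?_
  rw [min_def]
  split_ifs with hmin
  · have h1 := my_key_real (mul_pos hmS_pos hMS_pos) (mul_pos hmT_pos hMT_pos) hγ ha0 hb0 hstar'
    refine le_trans h1 (le_of_eq ?_)
    have hb4 : (‖S x‖ ^ 2) ^ 2 = ‖S x‖ ^ 4 := by ring
    rw [← hb4]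
    field_simp
    ring
  · have hstar'' : mT * MT * ‖S x‖ ^ 2 + mS * MS * ‖T x‖ ^ 2
        ≤ (MT * MS + mS * mT) * (inner ℂ (T x) (S x) : ℂ).re := by linarith
    have h1 := my_key_real (mul_pos hmT_pos hMT_pos) (mul_pos hmS_pos hMS_pos) hγ hb0 ha0 hstar''
    rw [mul_comm (‖S x‖ ^ 2) (‖T x‖ ^ 2)] at h1
    refine le_trans h1 (le_of_eq ?_)
    have ha4 : (‖T x‖ ^ 2) ^ 2 = ‖T x‖ ^ 4 := by ring
    rw [← ha4]
    field_simp
    ring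
end

section
/- Let ℋ be a complex Hilbert space and T, S ∈ 𝔅(ℋ) strictly positive bounded operators with TS = ST. Then for all x ∈ ℋ: ‖Tx‖‖Sx‖ ≤ (1/2)·( √(inf σ(T) inf σ(S)/(sup σ(T) sup σ(S))) + √(sup σ(T) sup σ(S)/(inf σ(T) inf σ(S))) ) · |⟨Tx, Sx⟩|. -/
set_option maxHeartbeats 1000000
set_option synthInstance.maxHeartbeats 400000

/-- If `a` commutes with `b`, then so does `cfc f a`. -/
lemma commute_cfc_of_commute {A : Type*} [CStarAlgebra A] {a b : A} (h : Commute a b)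
    (f : ℝ → ℝ) : Commute (cfc f a) b := by
  refine cfc_cases (fun y => Commute y b) a f (Commute.zero_left b) fun hf ha => ?_
  have key : ∀ g : C(spectrum ℝ a, ℝ), Commute (cfcHom ha g) b := by
    have hcont : Continuous (cfcHom ha (R := ℝ)) := (cfcHom_isClosedEmbedding ha).continuous
    intro g
    refine ContinuousMap.induction_on_of_compact (𝕜 := ℝ) ?_ ?_ ?_ ?_ ?_ ?_ g
    · intro r
      have : (ContinuousMap.const (spectrum ℝ a) r) = algebraMap ℝ C(spectrum ℝ a, ℝ) r := rfl
      rw [this, AlgHomClass.commutes]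
      exact Algebra.commutes r b
    · rw [cfcHom_id ha]; exact h
    · have hst : star ((ContinuousMap.id ℝ).restrict (spectrum ℝ a))
          = (ContinuousMap.id ℝ).restrict (spectrum ℝ a) := by
        ext y; simp
      rw [hst, cfcHom_id ha]; exact h
    · intro f g hf hg
      rw [map_add]; exact hf.add_left hg
    · intro f g hf hg
      rw [map_mul]; exact hf.mul_left hg
    · intro g hg
      have hcl : IsClosed {g : C(spectrum ℝ a, ℝ) | Commute (cfcHom ha g) b} :=
        isClosed_eq (hcont.mul continuous_const) (continuous_const.mul hcont)
      exact hg.mem_of_closed hcl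
  exact key _

/-- The product of commuting nonnegative elements of a C⋆-algebra is nonnegative. -/
lemma mul_nonneg_of_commute {A : Type*} [CStarAlgebra A] [PartialOrder A] [StarOrderedRing A]
    {a b : A} (ha : 0 ≤ a) (hb : 0 ≤ b) (h : Commute a b) : 0 ≤ a * b := by
  have ha' : IsSelfAdjoint a := IsSelfAdjoint.of_nonneg ha
  set r := cfc Real.sqrt a with hr
  have hrsa : IsSelfAdjoint r := cfc_predicate Real.sqrt a
  have hrr : r * r = a := by
    rw [hr, ← cfc_mul Real.sqrt Real.sqrt a]
    have : (spectrum ℝ a).EqOn (fun y => Real.sqrt y * Real.sqrt y) id := by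
      intro y hy
      exact Real.mul_self_sqrt (spectrum_nonneg_of_nonneg ha hy)
    rw [cfc_congr this, cfc_id ℝ a]
  have hcomm : Commute r b := commute_cfc_of_commute h Real.sqrt
  have : 0 ≤ r * b * star r := star_right_conjugate_nonneg hb r
  rw [hrsa.star_eq, mul_assoc, ← hcomm.eq, ← mul_assoc, hrr] at this
  exact this

section Helpers

variable {H : Type*} [NormedAddCommGroup H] [InnerProductSpace ℂ H] [CompleteSpace H]

lemma re_inner_real_smul (r : ℝ) (u v : H) :
    (inner ℂ (r • u) v : ℂ).re = r * (inner ℂ u v : ℂ).re := by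
  have h : (r • u : H) = (r : ℂ) • u := by
    rw [RCLike.real_smul_eq_coe_smul (K := ℂ)]
    rfl
  rw [h, inner_smul_left, Complex.conj_ofReal, Complex.re_ofReal_mul]

lemma re_inner_sub_algebraMap (T : H →L[ℂ] H) (r : ℝ) (x : H) :
    ((inner ℂ ((T - algebraMap ℝ (H →L[ℂ] H) r) x) x : ℂ)).re
      = (inner ℂ (T x) x : ℂ).re - r * ‖x‖ ^ 2 := by
  have h1 : (algebraMap ℝ (H →L[ℂ] H) r) x = (r : ℂ) • x := by
    rw [Algebra.algebraMap_eq_smul_one, ContinuousLinearMap.smul_apply,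
      ContinuousLinearMap.one_apply, RCLike.real_smul_eq_coe_smul (K := ℂ)]
    rfl
  rw [ContinuousLinearMap.sub_apply, inner_sub_left, h1, inner_smul_left, Complex.sub_re,
    Complex.conj_ofReal, Complex.re_ofReal_mul, ← inner_self_eq_norm_sq (𝕜 := ℂ) x]
  rfl

lemma algebraMap_le_of_inner {T : H →L[ℂ] H} (hT : IsSelfAdjoint T) {r : ℝ}
    (h : ∀ x : H, r * ‖x‖ ^ 2 ≤ (inner ℂ (T x) x : ℂ).re) :
    algebraMap ℝ (H →L[ℂ] H) r ≤ T := by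
  rw [ContinuousLinearMap.le_def]
  refine ⟨ContinuousLinearMap.isSelfAdjoint_iff_isSymmetric.mp
    (hT.sub (IsSelfAdjoint.algebraMap _ (star_trivial r))), fun x => ?_⟩
  have := re_inner_sub_algebraMap T r x
  simp only [ContinuousLinearMap.reApplyInnerSelf, RCLike.re_to_complex]
  rw [this]
  linarith [h x]

lemma inner_ge_of_algebraMap_le {T : H →L[ℂ] H} {r : ℝ}
    (h : algebraMap ℝ (H →L[ℂ] H) r ≤ T) (x : H) :
    r * ‖x‖ ^ 2 ≤ (inner ℂ (T x) x : ℂ).re := by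
  rw [ContinuousLinearMap.le_def] at h
  have := h.2 x
  simp only [ContinuousLinearMap.reApplyInnerSelf, RCLike.re_to_complex] at this
  rw [re_inner_sub_algebraMap T r x] at this
  linarith

lemma inner_le_of_le_algebraMap {T : H →L[ℂ] H} {r : ℝ}
    (h : T ≤ algebraMap ℝ (H →L[ℂ] H) r) (x : H) :
    (inner ℂ (T x) x : ℂ).re ≤ r * ‖x‖ ^ 2 := by
  rw [ContinuousLinearMap.le_def] at h
  have := h.2 x
  have h3 : algebraMap ℝ (H →L[ℂ] H) r - T = -(T - algebraMap ℝ (H →L[ℂ] H) r) := by abel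
  have h4 := re_inner_sub_algebraMap T r x
  rw [h3] at this
  simp only [ContinuousLinearMap.reApplyInnerSelf, RCLike.re_to_complex,
    ContinuousLinearMap.neg_apply, inner_neg_left, Complex.neg_re] at this
  linarith

end Helpers

/-- Multiplicative reverse Cauchy–Schwarz inequality for commuting strictly positive bounded
operators `T, S` on a complex Hilbert space. -/
theorem operator_multiplicative_reverse_cauchy_schwarz
    {H : Type*} [NormedAddCommGroup H] [InnerProductSpace ℂ H] [CompleteSpace H]
    (T S : H →L[ℂ] H)
    (hT : IsSelfAdjoint T) (hS : IsSelfAdjoint S)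
    (hT' : ∃ ε : ℝ, 0 < ε ∧ ∀ x : H, ε * ‖x‖ ^ 2 ≤ (inner ℂ (T x) x : ℂ).re)
    (hS' : ∃ ε : ℝ, 0 < ε ∧ ∀ x : H, ε * ‖x‖ ^ 2 ≤ (inner ℂ (S x) x : ℂ).re)
    (hTS : T * S = S * T) (x : H) :
    ‖T x‖ * ‖S x‖
      ≤ 1 / 2 * (Real.sqrt (sInf (spectrum ℝ T) * sInf (spectrum ℝ S)
                    / (sSup (spectrum ℝ T) * sSup (spectrum ℝ S)))
          + Real.sqrt (sSup (spectrum ℝ T) * sSup (spectrum ℝ S)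
                    / (sInf (spectrum ℝ T) * sInf (spectrum ℝ S))))
        * ‖(inner ℂ (T x) (S x) : ℂ)‖ := by
  obtain ⟨εT, hεT, hTb⟩ := hT'
  obtain ⟨εS, hεS, hSb⟩ := hS'
  rcases subsingleton_or_nontrivial H with hH | hH
  · have hx : T x = 0 := Subsingleton.elim _ _
    have hx' : S x = 0 := Subsingleton.elim _ _
    rw [hx, hx']
    simp
  have hnt : Nontrivial (H →L[ℂ] H) := inferInstance
  set m1 := sInf (spectrum ℝ T) with hm1def
  set M1 := sSup (spectrum ℝ T) with hM1def
  set m2 := sInf (spectrum ℝ S) with hm2def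
  set M2 := sSup (spectrum ℝ S) with hM2def
  set D := ‖(inner ℂ (T x) (S x) : ℂ)‖ with hDdef
  have hD : 0 ≤ D := norm_nonneg _
  -- spectra are nonempty and compact
  have hTne : (spectrum ℝ T).Nonempty := CFC.spectrum_nonempty ℝ T hT
  have hSne : (spectrum ℝ S).Nonempty := CFC.spectrum_nonempty ℝ S hS
  have hTcp : IsCompact (spectrum ℝ T) := isCompact_iff_compactSpace.mpr inferInstance
  have hScp : IsCompact (spectrum ℝ S) := isCompact_iff_compactSpace.mpr inferInstance
  -- lower bounds for the spectra
  have hεT_le : algebraMap ℝ (H →L[ℂ] H) εT ≤ T := algebraMap_le_of_inner hT hTb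
  have hεS_le : algebraMap ℝ (H →L[ℂ] H) εS ≤ S := algebraMap_le_of_inner hS hSb
  have hm1 : εT ≤ m1 :=
    le_csInf hTne fun y hy => (algebraMap_le_iff_le_spectrum (a := T) hT).mp hεT_le y hy
  have hm2 : εS ≤ m2 :=
    le_csInf hSne fun y hy => (algebraMap_le_iff_le_spectrum (a := S) hS).mp hεS_le y hy
  have hm1pos : 0 < m1 := lt_of_lt_of_le hεT hm1
  have hm2pos : 0 < m2 := lt_of_lt_of_le hεS hm2
  have hm1M1 : m1 ≤ M1 := csInf_le_csSup hTne hTcp.bddBelow hTcp.bddAbove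
  have hm2M2 : m2 ≤ M2 := csInf_le_csSup hSne hScp.bddBelow hScp.bddAbove
  have hM1pos : 0 < M1 := lt_of_lt_of_le hm1pos hm1M1
  have hM2pos : 0 < M2 := lt_of_lt_of_le hm2pos hm2M2
  -- operator bounds
  have hle1 : algebraMap ℝ (H →L[ℂ] H) m1 ≤ T :=
    (algebraMap_le_iff_le_spectrum (a := T) hT).mpr fun y hy => csInf_le hTcp.bddBelow hy
  have hge1 : T ≤ algebraMap ℝ (H →L[ℂ] H) M1 :=
    (le_algebraMap_iff_spectrum_le (a := T) hT).mpr fun y hy => le_csSup hTcp.bddAbove hy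
  have hle2 : algebraMap ℝ (H →L[ℂ] H) m2 ≤ S :=
    (algebraMap_le_iff_le_spectrum (a := S) hS).mpr fun y hy => csInf_le hScp.bddBelow hy
  have hge2 : S ≤ algebraMap ℝ (H →L[ℂ] H) M2 :=
    (le_algebraMap_iff_spectrum_le (a := S) hS).mpr fun y hy => le_csSup hScp.bddAbove hy
  -- the two auxiliary positive operators
  set P : H →L[ℂ] H := M2 • T - m1 • S with hPdef
  set Q : H →L[ℂ] H := M1 • S - m2 • T with hQdef
  have hPsa : IsSelfAdjoint P :=
    (IsSelfAdjoint.smul (star_trivial M2) hT).sub (IsSelfAdjoint.smul (star_trivial m1) hS)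
  have hQsa : IsSelfAdjoint Q :=
    (IsSelfAdjoint.smul (star_trivial M1) hS).sub (IsSelfAdjoint.smul (star_trivial m2) hT)
  have hP0 : (0 : H →L[ℂ] H) ≤ P := by
    rw [ContinuousLinearMap.nonneg_iff_isPositive]
    refine ⟨ContinuousLinearMap.isSelfAdjoint_iff_isSymmetric.mp hPsa, fun y => ?_⟩
    have h1 := inner_ge_of_algebraMap_le hle1 y
    have h2 := inner_le_of_le_algebraMap hge2 y
    have e : P y = M2 • (T y) - m1 • (S y) := by
      rw [hPdef]; simp [ContinuousLinearMap.sub_apply]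
    simp only [ContinuousLinearMap.reApplyInnerSelf, RCLike.re_to_complex, e, inner_sub_left,
      Complex.sub_re, re_inner_real_smul]
    nlinarith [sq_nonneg ‖y‖, hM2pos.le, hm1pos.le]
  have hQ0 : (0 : H →L[ℂ] H) ≤ Q := by
    rw [ContinuousLinearMap.nonneg_iff_isPositive]
    refine ⟨ContinuousLinearMap.isSelfAdjoint_iff_isSymmetric.mp hQsa, fun y => ?_⟩
    have h1 := inner_ge_of_algebraMap_le hle2 y
    have h2 := inner_le_of_le_algebraMap hge1 y
    have e : Q y = M1 • (S y) - m2 • (T y) := by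
      rw [hQdef]; simp [ContinuousLinearMap.sub_apply]
    simp only [ContinuousLinearMap.reApplyInnerSelf, RCLike.re_to_complex, e, inner_sub_left,
      Complex.sub_re, re_inner_real_smul]
    nlinarith [sq_nonneg ‖y‖, hM1pos.le, hm2pos.le]
  have hTS' : Commute T S := hTS
  have hPQcomm : Commute P Q := by
    have hc1 : Commute (M2 • T) (M1 • S) := (hTS'.smul_left M2).smul_right M1
    have hc2 : Commute (M2 • T) (m2 • T) := ((Commute.refl T).smul_left M2).smul_right m2
    have hc3 : Commute (m1 • S) (M1 • S) := ((Commute.refl S).smul_left m1).smul_right M1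
    have hc4 : Commute (m1 • S) (m2 • T) := (hTS'.symm.smul_left m1).smul_right m2
    exact (hc1.sub_right hc2).sub_left (hc3.sub_right hc4)
  have hPQ0 : (0 : H →L[ℂ] H) ≤ P * Q := mul_nonneg_of_commute hP0 hQ0 hPQcomm
  -- expand P * Q
  have hexp : P * Q = (m1 * m2 + M1 * M2) • (T * S) - (m2 * M2) • (T * T)
      - (m1 * M1) • (S * S) := by
    rw [hPdef, hQdef]
    simp only [sub_mul, mul_sub, smul_mul_assoc, mul_smul_comm, smul_smul, smul_sub]
    rw [← hTS]
    module
  -- inner product consequences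
  have hsymT := (ContinuousLinearMap.isSelfAdjoint_iff_isSymmetric.mp hT)
  have hnormT : (inner ℂ ((T * T) x) x : ℂ).re = ‖T x‖ ^ 2 := by
    have : (inner ℂ ((T * T) x) x : ℂ) = inner ℂ (T x) (T x) := by
      rw [ContinuousLinearMap.mul_apply]
      exact hsymT (T x) x
    rw [this, ← RCLike.re_to_complex, inner_self_eq_norm_sq (𝕜 := ℂ)]
  have hsymS := (ContinuousLinearMap.isSelfAdjoint_iff_isSymmetric.mp hS)
  have hnormS : (inner ℂ ((S * S) x) x : ℂ).re = ‖S x‖ ^ 2 := by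
    have : (inner ℂ ((S * S) x) x : ℂ) = inner ℂ (S x) (S x) := by
      rw [ContinuousLinearMap.mul_apply]
      exact hsymS (S x) x
    rw [this, ← RCLike.re_to_complex, inner_self_eq_norm_sq (𝕜 := ℂ)]
  have hTSx : (inner ℂ ((T * S) x) x : ℂ).re = (inner ℂ (T x) (S x) : ℂ).re := by
    have h1 : (inner ℂ ((T * S) x) x : ℂ) = inner ℂ (S x) (T x) := by
      rw [ContinuousLinearMap.mul_apply]
      exact hsymT (S x) x
    have h2 : (inner ℂ (T x) (S x) : ℂ) = starRingEnd ℂ (inner ℂ (S x) (T x) : ℂ) :=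
      (inner_conj_symm _ _).symm
    rw [h1, h2, Complex.conj_re]
  have hreD : (inner ℂ (T x) (S x) : ℂ).re ≤ D := Complex.re_le_norm _
  -- the key inequality
  have hkey : m2 * M2 * ‖T x‖ ^ 2 + m1 * M1 * ‖S x‖ ^ 2 ≤ (m1 * m2 + M1 * M2) * D := by
    have h0' : algebraMap ℝ (H →L[ℂ] H) (0 : ℝ) ≤ P * Q := by
      rw [map_zero]; exact hPQ0
    have h0 := inner_ge_of_algebraMap_le h0' x
    rw [hexp] at h0
    simp only [ContinuousLinearMap.sub_apply, ContinuousLinearMap.smul_apply, inner_sub_left,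
      Complex.sub_re, re_inner_real_smul, hnormT, hnormS, hTSx] at h0
    have hc : 0 ≤ m1 * m2 + M1 * M2 := by positivity
    nlinarith [mul_le_mul_of_nonneg_left hreD hc]
  -- final scalar computation
  set m := m1 * m2 with hm
  set M := M1 * M2 with hM
  have hmpos : 0 < m := by positivity
  have hMpos : 0 < M := by positivity
  set s := Real.sqrt (m * M) with hs
  have hspos : 0 < s := Real.sqrt_pos.mpr (by positivity)
  have h1 : 0 < Real.sqrt m := Real.sqrt_pos.mpr hmpos
  have h2 : 0 < Real.sqrt M := Real.sqrt_pos.mpr hMpos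
  have e1 : Real.sqrt m * Real.sqrt m = m := Real.mul_self_sqrt hmpos.le
  have e2 : Real.sqrt M * Real.sqrt M = M := Real.mul_self_sqrt hMpos.le
  have hsum : Real.sqrt (m / M) + Real.sqrt (M / m) = (m + M) / s := by
    rw [Real.sqrt_div hmpos.le, Real.sqrt_div hMpos.le, hs, Real.sqrt_mul hmpos.le]
    field_simp
    rw [Real.sq_sqrt hmpos.le, Real.sq_sqrt hMpos.le]
  have hsprod : Real.sqrt (m2 * M2) * Real.sqrt (m1 * M1) = s := by
    rw [hs, ← Real.sqrt_mul (by positivity)]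
    congr 1
    rw [hm, hM]; ring
  have hT2 : (Real.sqrt (m2 * M2) * ‖T x‖) ^ 2 = m2 * M2 * ‖T x‖ ^ 2 := by
    rw [mul_pow, Real.sq_sqrt (by positivity)]
  have hS2 : (Real.sqrt (m1 * M1) * ‖S x‖) ^ 2 = m1 * M1 * ‖S x‖ ^ 2 := by
    rw [mul_pow, Real.sq_sqrt (by positivity)]
  have amgm := two_mul_le_add_sq (Real.sqrt (m2 * M2) * ‖T x‖) (Real.sqrt (m1 * M1) * ‖S x‖)
  rw [hT2, hS2] at amgm
  have hchain : 2 * s * (‖T x‖ * ‖S x‖) ≤ (m + M) * D := by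
    calc 2 * s * (‖T x‖ * ‖S x‖)
        = 2 * (Real.sqrt (m2 * M2) * ‖T x‖) * (Real.sqrt (m1 * M1) * ‖S x‖) := by
          rw [← hsprod]; ring
      _ ≤ m2 * M2 * ‖T x‖ ^ 2 + m1 * M1 * ‖S x‖ ^ 2 := amgm
      _ ≤ (m + M) * D := hkey
  rw [hsum]
  have hre : 1 / 2 * ((m + M) / s) * D = (m + M) * D / (2 * s) := by
    field_simp
  rw [hre, le_div_iff₀ (by positivity)]
  linarith [hchain]
end

section
/- Let (X, Σ, μ) be a probability space and let f, g be essentially bounded measurable functions on X with 0 < a ≤ f ≤ A and 0 < b ≤ g ≤ B (almost everywhere) for constants a, A, b, B. Then ∫_X f² dμ · ∫_X g² dμ − (∫_X fg dμ)² ≤ ((AB − ab)²/4) · min{ (1/(B²b²))(∫_X g² dμ)², (1/(A²a²))(∫_X f² dμ)² }. -/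
open MeasureTheory

lemma reverse_cs_alg (a A b B S T P : ℝ) (ha : 0 < a) (hb : 0 < b)
    (hA : 0 < A) (hB : 0 < B) (hT : 0 ≤ T)
    (h : b * B * S + a * A * T ≤ (A * B + a * b) * P) :
    S * T - P ^ 2 ≤ (A * B - a * b) ^ 2 / 4 * (1 / (B ^ 2 * b ^ 2) * T ^ 2) := by
  have hbB : 0 < b * B := by positivity
  have h2 : S * T ≤ ((A * B + a * b) * P - a * A * T) * T / (b * B) := by
    rw [le_div_iff₀ hbB]
    nlinarith [mul_le_mul_of_nonneg_right h hT]
  have h3 : ((A * B + a * b) * P - a * A * T) * T / (b * B) - P ^ 2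
      ≤ (A * B - a * b) ^ 2 / 4 * (1 / (B ^ 2 * b ^ 2) * T ^ 2) := by
    rw [div_sub' (ne_of_gt hbB), div_le_iff₀ hbB]
    have key : 0 ≤ (2 * b * B * P - (A * B + a * b) * T) ^ 2 := sq_nonneg _
    field_simp
    try rw [le_div_iff₀ (by positivity : (0:ℝ) < 4 * (B ^ 2 * b ^ 2))]
    nlinarith [key, mul_nonneg hbB.le key]
  linarith

/-- Additive reverse Cauchy–Schwarz (integral) inequality on a probability space. -/
theorem integral_additive_reverse_cauchy_schwarz
    {X : Type*} [MeasurableSpace X] (μ : Measure X) [IsProbabilityMeasure μ]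
    (f g : X → ℝ) (hf : Measurable f) (hg : Measurable g)
    (a A b B : ℝ) (ha : 0 < a) (hb : 0 < b)
    (hfA : ∀ᵐ x ∂μ, a ≤ f x ∧ f x ≤ A)
    (hgB : ∀ᵐ x ∂μ, b ≤ g x ∧ g x ≤ B) :
    (∫ x, (f x) ^ 2 ∂μ) * (∫ x, (g x) ^ 2 ∂μ) - (∫ x, f x * g x ∂μ) ^ 2
      ≤ (A * B - a * b) ^ 2 / 4
        * min (1 / (B ^ 2 * b ^ 2) * (∫ x, (g x) ^ 2 ∂μ) ^ 2)
              (1 / (A ^ 2 * a ^ 2) * (∫ x, (f x) ^ 2 ∂μ) ^ 2) := by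
  -- a ≤ A, b ≤ B since μ ≠ 0
  have hne : (∀ᵐ x ∂μ, a ≤ f x ∧ f x ≤ A ∧ b ≤ g x ∧ g x ≤ B) := by
    filter_upwards [hfA, hgB] with x h1 h2
    exact ⟨h1.1, h1.2, h2.1, h2.2⟩
  obtain ⟨x0, hx0⟩ := hne.exists
  have hA : 0 < A := lt_of_lt_of_le ha (hx0.1.trans hx0.2.1)
  have hB : 0 < B := lt_of_lt_of_le hb (hx0.2.2.1.trans hx0.2.2.2)
  -- integrability
  have hif : Integrable (fun x => (f x) ^ 2) μ :=
    ⟨(hf.pow_const 2).aestronglyMeasurable,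
      HasFiniteIntegral.of_bounded (C := A ^ 2) (by
        filter_upwards [hfA] with x ⟨h1, h2⟩
        have : |f x| ≤ A := abs_le.mpr ⟨by linarith, h2⟩
        calc ‖(f x) ^ 2‖ = |f x| ^ 2 := by rw [Real.norm_eq_abs, abs_pow, sq_abs, ← sq_abs]
        _ ≤ A ^ 2 := by nlinarith [abs_nonneg (f x)])⟩
  have hig : Integrable (fun x => (g x) ^ 2) μ :=
    ⟨(hg.pow_const 2).aestronglyMeasurable,
      HasFiniteIntegral.of_bounded (C := B ^ 2) (by
        filter_upwards [hgB] with x ⟨h1, h2⟩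
        have : |g x| ≤ B := abs_le.mpr ⟨by linarith, h2⟩
        calc ‖(g x) ^ 2‖ = |g x| ^ 2 := by rw [Real.norm_eq_abs, abs_pow, sq_abs, ← sq_abs]
        _ ≤ B ^ 2 := by nlinarith [abs_nonneg (g x)])⟩
  have hifg : Integrable (fun x => f x * g x) μ :=
    ⟨(hf.mul hg).aestronglyMeasurable,
      HasFiniteIntegral.of_bounded (C := A * B) (by
        filter_upwards [hfA, hgB] with x ⟨h1, h2⟩ ⟨h3, h4⟩
        rw [Real.norm_eq_abs, abs_mul]
        have h5 : |f x| ≤ A := abs_le.mpr ⟨by linarith, h2⟩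
        have h6 : |g x| ≤ B := abs_le.mpr ⟨by linarith, h4⟩
        exact mul_le_mul h5 h6 (abs_nonneg _) hA.le)⟩
  set S := ∫ x, (f x) ^ 2 ∂μ
  set T := ∫ x, (g x) ^ 2 ∂μ
  set P := ∫ x, f x * g x ∂μ
  have hSnn : 0 ≤ S := integral_nonneg fun x => sq_nonneg _
  have hTnn : 0 ≤ T := integral_nonneg fun x => sq_nonneg _
  -- key integral inequality
  have hkey : b * B * S + a * A * T ≤ (A * B + a * b) * P := by
    have hmono : ∫ x, (b * B * (f x) ^ 2 + a * A * (g x) ^ 2) ∂μ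
        ≤ ∫ x, (A * B + a * b) * (f x * g x) ∂μ := by
      apply integral_mono_ae ((hif.const_mul _).add (hig.const_mul _)) (hifg.const_mul _)
      filter_upwards [hfA, hgB] with x ⟨h1, h2⟩ ⟨h3, h4⟩
      show b * B * f x ^ 2 + a * A * g x ^ 2 ≤ (A * B + a * b) * (f x * g x)
      have e1 : a * g x ≤ B * f x := by nlinarith
      have e2 : b * f x ≤ A * g x := by nlinarith
      nlinarith [mul_nonneg (by linarith : (0:ℝ) ≤ B * f x - a * g x)
        (by linarith : (0:ℝ) ≤ A * g x - b * f x)]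
    rw [integral_add (hif.const_mul _) (hig.const_mul _), integral_const_mul,
      integral_const_mul, integral_const_mul] at hmono
    exact hmono
  have hkey' : a * A * T + b * B * S ≤ (B * A + b * a) * P := by linarith
  rw [mul_min_of_nonneg _ _ (by positivity : (0:ℝ) ≤ (A * B - a * b) ^ 2 / 4)]
  apply le_min
  · exact reverse_cs_alg a A b B S T P ha hb hA hB hTnn hkey
  · have := reverse_cs_alg b B a A T S P hb ha hB hA hSnn hkey'
    linarith
end

section
/- Let (X, Σ, μ) be a probability space and let f, g be essentially bounded measurable functions on X with 0 < a ≤ f ≤ A and 0 < b ≤ g ≤ B (almost everywhere) for constants a, A, b, B. Then (∫_X f² dμ)^{1/2} (∫_X g² dμ)^{1/2} ≤ (1/2)( √(ab/(AB)) + √(AB/(ab)) ) · ∫_X fg dμ. -/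
open MeasureTheory

/-- Multiplicative reverse Cauchy–Schwarz (integral) inequality on a probability space. -/
theorem integral_multiplicative_reverse_cauchy_schwarz
    {X : Type*} [MeasurableSpace X] (μ : Measure X) [IsProbabilityMeasure μ]
    (f g : X → ℝ) (hf : Measurable f) (hg : Measurable g)
    (a A b B : ℝ) (ha : 0 < a) (hb : 0 < b)
    (hfA : ∀ᵐ x ∂μ, a ≤ f x ∧ f x ≤ A)
    (hgB : ∀ᵐ x ∂μ, b ≤ g x ∧ g x ≤ B) :
    Real.sqrt (∫ x, (f x) ^ 2 ∂μ) * Real.sqrt (∫ x, (g x) ^ 2 ∂μ)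
      ≤ 1 / 2 * (Real.sqrt (a * b / (A * B)) + Real.sqrt (A * B / (a * b)))
          * ∫ x, f x * g x ∂μ := by
  obtain ⟨x0, hx0⟩ := (hfA.and hgB).exists
  have hA : 0 < A := lt_of_lt_of_le ha (hx0.1.1.trans hx0.1.2)
  have hB : 0 < B := lt_of_lt_of_le hb (hx0.2.1.trans hx0.2.2)
  -- integrability
  have hif2 : Integrable (fun x => f x ^ 2) μ := by
    refine Integrable.mono' (integrable_const (A ^ 2)) (hf.pow_const 2).aestronglyMeasurable ?_
    filter_upwards [hfA] with x hx
    rw [Real.norm_eq_abs, abs_pow, sq_abs]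
    nlinarith [hx.1, hx.2]
  have hig2 : Integrable (fun x => g x ^ 2) μ := by
    refine Integrable.mono' (integrable_const (B ^ 2)) (hg.pow_const 2).aestronglyMeasurable ?_
    filter_upwards [hgB] with x hx
    rw [Real.norm_eq_abs, abs_pow, sq_abs]
    nlinarith [hx.1, hx.2]
  have hifg : Integrable (fun x => f x * g x) μ := by
    refine Integrable.mono' (integrable_const (A * B)) (hf.mul hg).aestronglyMeasurable ?_
    filter_upwards [hfA, hgB] with x hx hy
    rw [Real.norm_eq_abs, abs_of_nonneg (by nlinarith [hx.1, hy.1] : (0:ℝ) ≤ f x * g x)]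
    nlinarith [hx.1, hx.2, hy.1, hy.2]
  -- pointwise (Bf - ag)(bf - Ag) ≤ 0
  have hpt : ∀ᵐ x ∂μ, b * B * f x ^ 2 + a * A * g x ^ 2
      ≤ (A * B + a * b) * (f x * g x) := by
    filter_upwards [hfA, hgB] with x hx hy
    have h1 : 0 ≤ B * f x - a * g x := by nlinarith [hx.1, hy.2]
    have h2 : 0 ≤ A * g x - b * f x := by nlinarith [hx.2, hy.1]
    nlinarith [mul_nonneg h1 h2]
  set I := ∫ x, f x ^ 2 ∂μ with hI
  set J := ∫ x, g x ^ 2 ∂μ with hJ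
  set K := ∫ x, f x * g x ∂μ with hK
  have hkey : b * B * I + a * A * J ≤ (A * B + a * b) * K := by
    have := integral_mono_ae ((hif2.const_mul (b * B)).add (hig2.const_mul (a * A)))
      (hifg.const_mul (A * B + a * b)) hpt
    simp only [Pi.add_apply] at this
    rwa [integral_add (hif2.const_mul (b * B)) (hig2.const_mul (a * A)),
      integral_const_mul, integral_const_mul, integral_const_mul] at this
  have hInn : 0 ≤ I := integral_nonneg fun x => sq_nonneg _
  have hJnn : 0 ≤ J := integral_nonneg fun x => sq_nonneg _
  have hKnn : 0 ≤ K := by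
    refine integral_nonneg_of_ae ?_
    filter_upwards [hfA, hgB] with x hx hy
    simp only [Pi.zero_apply]
    nlinarith [hx.1, hy.1]
  -- AM-GM
  have hu : (0:ℝ) ≤ b * B * I := by positivity
  have hv : (0:ℝ) ≤ a * A * J := by positivity
  have hamgm : 2 * Real.sqrt (b * B * I) * Real.sqrt (a * A * J)
      ≤ b * B * I + a * A * J := by
    nlinarith [sq_nonneg (Real.sqrt (b * B * I) - Real.sqrt (a * A * J)),
      Real.sq_sqrt hu, Real.sq_sqrt hv]
  have hsplit : Real.sqrt (b * B * I) * Real.sqrt (a * A * J)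
      = Real.sqrt (a * b) * Real.sqrt (A * B) * (Real.sqrt I * Real.sqrt J) := by
    rw [Real.sqrt_mul (by positivity : (0:ℝ) ≤ b * B) I,
      Real.sqrt_mul (by positivity : (0:ℝ) ≤ a * A) J,
      Real.sqrt_mul hb.le B, Real.sqrt_mul ha.le A,
      Real.sqrt_mul ha.le b, Real.sqrt_mul hA.le B]
    ring
  set p := Real.sqrt (a * b) with hp
  set q := Real.sqrt (A * B) with hq
  have hppos : 0 < p := Real.sqrt_pos.mpr (by positivity)
  have hqpos : 0 < q := Real.sqrt_pos.mpr (by positivity)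
  have hp2 : p ^ 2 = a * b := Real.sq_sqrt (by positivity)
  have hq2 : q ^ 2 = A * B := Real.sq_sqrt (by positivity)
  have hC : 1 / 2 * (Real.sqrt (a * b / (A * B)) + Real.sqrt (A * B / (a * b)))
      = (A * B + a * b) / (2 * (p * q)) := by
    rw [Real.sqrt_div (by positivity : (0:ℝ) ≤ a * b),
      Real.sqrt_div (by positivity : (0:ℝ) ≤ A * B), ← hp, ← hq, ← hp2, ← hq2]
    field_simp
    ring
  rw [hC, div_mul_eq_mul_div, le_div_iff₀ (by positivity)]
  have h2 : 2 * (p * q) * (Real.sqrt I * Real.sqrt J) ≤ (A * B + a * b) * K := by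
    calc 2 * (p * q) * (Real.sqrt I * Real.sqrt J)
        = 2 * (Real.sqrt (b * B * I) * Real.sqrt (a * A * J)) := by rw [hsplit]; ring
      _ ≤ b * B * I + a * A * J := by linarith
      _ ≤ (A * B + a * b) * K := hkey
  calc Real.sqrt I * Real.sqrt J * (2 * (p * q))
      = 2 * (p * q) * (Real.sqrt I * Real.sqrt J) := by ring
    _ ≤ (A * B + a * b) * K := h2
end

section
/- Let a₁,…,aₙ and b₁,…,bₙ be positive real numbers with 0 < a ≤ aᵢ ≤ A < ∞ and 0 < b ≤ bᵢ ≤ B < ∞ for all 1 ≤ i ≤ n, and let w₁,…,wₙ be positive real numbers. Then (∑_{i=1}^n aᵢ²wᵢ)(∑_{i=1}^n bᵢ²wᵢ) − (∑_{i=1}^n aᵢbᵢwᵢ)² ≤ ((AB − ab)²/4) · min{ (1/(B²b²))(∑_{i=1}^n bᵢ²wᵢ)², (1/(A²a²))(∑_{i=1}^n aᵢ²wᵢ)² }. -/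
lemma reverse_cs_aux (Sa Sb Sab a A b B : ℝ) (ha : 0 < a) (hb : 0 < b)
    (hbB : b ≤ B) (hSb : 0 ≤ Sb)
    (h : b * B * Sa + a * A * Sb ≤ (A * B + a * b) * Sab) :
    Sa * Sb - Sab ^ 2 ≤ (A * B - a * b) ^ 2 / 4 * (1 / (B ^ 2 * b ^ 2) * Sb ^ 2) := by
  have hB : 0 < B := hb.trans_le hbB
  have hD : (0 : ℝ) < 4 * (B ^ 2 * b ^ 2) := by positivity
  have key : (Sa * Sb - Sab ^ 2) * (4 * (B ^ 2 * b ^ 2)) ≤ (A * B - a * b) ^ 2 * Sb ^ 2 := by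
    nlinarith [mul_le_mul_of_nonneg_right h hSb,
      sq_nonneg (2 * b * B * Sab - (A * B + a * b) * Sb), mul_pos hb hB]
  have := (le_div_iff₀ hD).mpr key
  calc Sa * Sb - Sab ^ 2 ≤ (A * B - a * b) ^ 2 * Sb ^ 2 / (4 * (B ^ 2 * b ^ 2)) := this
    _ = (A * B - a * b) ^ 2 / 4 * (1 / (B ^ 2 * b ^ 2) * Sb ^ 2) := by ring

/-- Weighted additive reverse Cauchy–Schwarz inequality with a `min` of two bounds. -/
theorem weighted_additive_reverse_cauchy_schwarz
    (n : ℕ) (hn : 0 < n) (a A b B : ℝ) (ha : 0 < a) (hb : 0 < b)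
    (av bv w : Fin n → ℝ)
    (haA : ∀ i, a ≤ av i ∧ av i ≤ A) (hbB : ∀ i, b ≤ bv i ∧ bv i ≤ B)
    (hw : ∀ i, 0 < w i) :
    (∑ i, (av i) ^ 2 * w i) * (∑ i, (bv i) ^ 2 * w i) - (∑ i, av i * bv i * w i) ^ 2
      ≤ (A * B - a * b) ^ 2 / 4
        * min (1 / (B ^ 2 * b ^ 2) * (∑ i, (bv i) ^ 2 * w i) ^ 2)
              (1 / (A ^ 2 * a ^ 2) * (∑ i, (av i) ^ 2 * w i) ^ 2) := by
  set Sa := ∑ i, (av i) ^ 2 * w i with hSa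
  set Sb := ∑ i, (bv i) ^ 2 * w i with hSbdef
  set Sab := ∑ i, av i * bv i * w i with hSab
  have haA' : a ≤ A := (haA ⟨0, hn⟩).1.trans (haA ⟨0, hn⟩).2
  have hbB' : b ≤ B := (hbB ⟨0, hn⟩).1.trans (hbB ⟨0, hn⟩).2
  have hSa0 : 0 ≤ Sa := Finset.sum_nonneg fun i _ => mul_nonneg (sq_nonneg _) (hw i).le
  have hSb0 : 0 ≤ Sb := Finset.sum_nonneg fun i _ => mul_nonneg (sq_nonneg _) (hw i).le
  have hsum : ∀ i ∈ Finset.univ, (b * B * (av i) ^ 2 + a * A * (bv i) ^ 2) * w i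
      ≤ (A * B + a * b) * (av i * bv i) * w i := by
    intro i _
    have h1 : 0 ≤ B * av i - a * bv i := by nlinarith [(haA i).1, (hbB i).2, ha.le, hb.le]
    have h2 : 0 ≤ A * bv i - b * av i := by nlinarith [(haA i).2, (hbB i).1, ha.le, hb.le]
    nlinarith [mul_nonneg (mul_nonneg h1 h2) (hw i).le]
  have h : b * B * Sa + a * A * Sb ≤ (A * B + a * b) * Sab := by
    calc b * B * Sa + a * A * Sb
        = ∑ i, (b * B * (av i) ^ 2 + a * A * (bv i) ^ 2) * w i := by
          rw [hSa, hSbdef, Finset.mul_sum, Finset.mul_sum, ← Finset.sum_add_distrib]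
          exact Finset.sum_congr rfl fun i _ => by ring
      _ ≤ ∑ i, (A * B + a * b) * (av i * bv i) * w i := Finset.sum_le_sum hsum
      _ = (A * B + a * b) * Sab := by
          rw [hSab, Finset.mul_sum]; exact Finset.sum_congr rfl fun i _ => by ring
  rw [mul_min_of_nonneg _ _ (by positivity : (0:ℝ) ≤ (A * B - a * b) ^ 2 / 4)]
  apply le_min
  · exact reverse_cs_aux Sa Sb Sab a A b B ha hb hbB' hSb0 h
  · have h2 : a * A * Sb + b * B * Sa ≤ (B * A + b * a) * Sab := by linarith [h]
    calc Sa * Sb - Sab ^ 2 = Sb * Sa - Sab ^ 2 := by ring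
      _ ≤ (B * A - b * a) ^ 2 / 4 * (1 / (A ^ 2 * a ^ 2) * Sa ^ 2) :=
          reverse_cs_aux Sb Sa Sab b B a A hb ha haA' hSa0 h2
      _ = (A * B - a * b) ^ 2 / 4 * (1 / (A ^ 2 * a ^ 2) * Sa ^ 2) := by ring
end

section
/- Let a₁,…,aₙ and b₁,…,bₙ be positive real numbers with 0 < a ≤ aᵢ ≤ A < ∞ and 0 < b ≤ bᵢ ≤ B < ∞ for all 1 ≤ i ≤ n. Then (∑_{i=1}^n aᵢ²)(∑_{i=1}^n bᵢ²) − (∑_{i=1}^n aᵢbᵢ)² ≤ ((AB − ab)²/4) · min{ (1/(A²a²))(∑_{i=1}^n aᵢ²)², (1/(B²b²))(∑_{i=1}^n bᵢ²)², (1/(abAB))(∑_{i=1}^n aᵢbᵢ)² }. -/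
/-- Improved additive Pólya–Szegő inequality with a `min` of three bounds. -/
theorem improved_polya_szego
    (n : ℕ) (hn : 0 < n) (a A b B : ℝ) (ha : 0 < a) (hb : 0 < b)
    (av bv : Fin n → ℝ)
    (haA : ∀ i, a ≤ av i ∧ av i ≤ A) (hbB : ∀ i, b ≤ bv i ∧ bv i ≤ B) :
    (∑ i, (av i) ^ 2) * (∑ i, (bv i) ^ 2) - (∑ i, av i * bv i) ^ 2
      ≤ (A * B - a * b) ^ 2 / 4
        * min (1 / (A ^ 2 * a ^ 2) * (∑ i, (av i) ^ 2) ^ 2)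
            (min (1 / (B ^ 2 * b ^ 2) * (∑ i, (bv i) ^ 2) ^ 2)
                 (1 / (a * b * A * B) * (∑ i, av i * bv i) ^ 2)) := by
  set S1 := ∑ i, (av i) ^ 2 with hS1def
  set S2 := ∑ i, (bv i) ^ 2 with hS2def
  set S3 := ∑ i, av i * bv i with hS3def
  have i0 : Fin n := ⟨0, hn⟩
  have hA : 0 < A := lt_of_lt_of_le ha ((haA i0).1.trans (haA i0).2)
  have hB : 0 < B := lt_of_lt_of_le hb ((hbB i0).1.trans (hbB i0).2)
  have hS1 : 0 ≤ S1 := Finset.sum_nonneg fun i _ => sq_nonneg _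
  have hS2 : 0 ≤ S2 := Finset.sum_nonneg fun i _ => sq_nonneg _
  have hS3 : 0 ≤ S3 := Finset.sum_nonneg fun i _ => by
    have h1 := (haA i).1; have h3 := (hbB i).1
    have : 0 < av i := lt_of_lt_of_le ha h1
    have : 0 < bv i := lt_of_lt_of_le hb h3
    positivity
  have hterm : ∀ i, b * B * (av i) ^ 2 + a * A * (bv i) ^ 2
      ≤ (A * B + a * b) * (av i * bv i) := by
    intro i
    obtain ⟨h1, h2⟩ := haA i
    obtain ⟨h3, h4⟩ := hbB i
    have e1 : 0 ≤ B * av i - a * bv i := by nlinarith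
    have e2 : 0 ≤ A * bv i - b * av i := by nlinarith
    nlinarith [mul_nonneg e1 e2]
  have hsum : b * B * S1 + a * A * S2 ≤ (A * B + a * b) * S3 := by
    calc b * B * S1 + a * A * S2
        = ∑ i, (b * B * (av i) ^ 2 + a * A * (bv i) ^ 2) := by
          rw [hS1def, hS2def, Finset.mul_sum, Finset.mul_sum,
            ← Finset.sum_add_distrib]
      _ ≤ ∑ i, (A * B + a * b) * (av i * bv i) :=
          Finset.sum_le_sum fun i _ => hterm i
      _ = (A * B + a * b) * S3 := by rw [hS3def, Finset.mul_sum]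
  have hsum' : 0 ≤ (A * B + a * b) * S3 - (b * B * S1 + a * A * S2) :=
    sub_nonneg.2 hsum
  have hc : (0:ℝ) ≤ (A * B - a * b) ^ 2 / 4 := by positivity
  rw [mul_min_of_nonneg _ _ hc, mul_min_of_nonneg _ _ hc]
  refine le_min ?_ (le_min ?_ ?_)
  · -- bound via S1^2
    rw [show (A * B - a * b) ^ 2 / 4 * (1 / (A ^ 2 * a ^ 2) * S1 ^ 2)
        = (A * B - a * b) ^ 2 * S1 ^ 2 / (4 * (A ^ 2 * a ^ 2)) by ring,
      le_div_iff₀ (by positivity)]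
    nlinarith [mul_nonneg (by positivity : (0:ℝ) ≤ a * A * S1) hsum', sq_nonneg (2 * a * A * S3 - (A * B + a * b) * S1)]
  · -- bound via S2^2
    rw [show (A * B - a * b) ^ 2 / 4 * (1 / (B ^ 2 * b ^ 2) * S2 ^ 2)
        = (A * B - a * b) ^ 2 * S2 ^ 2 / (4 * (B ^ 2 * b ^ 2)) by ring,
      le_div_iff₀ (by positivity)]
    nlinarith [mul_nonneg (by positivity : (0:ℝ) ≤ b * B * S2) hsum', sq_nonneg (2 * b * B * S3 - (A * B + a * b) * S2)]
  · -- bound via S3^2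
    rw [show (A * B - a * b) ^ 2 / 4 * (1 / (a * b * A * B) * S3 ^ 2)
        = (A * B - a * b) ^ 2 * S3 ^ 2 / (4 * (a * b * A * B)) by ring,
      le_div_iff₀ (by positivity)]
    have hL : 0 ≤ b * B * S1 + a * A * S2 := by positivity
    have hsq : (b * B * S1 + a * A * S2) ^ 2 ≤ ((A * B + a * b) * S3) ^ 2 := by
      apply pow_le_pow_left₀ hL hsum
    nlinarith [hsq, sq_nonneg (b * B * S1 - a * A * S2)]
end

section
/- (Pólya–Szegő inequality, multiplicative form) Let a₁,…,aₙ and b₁,…,bₙ be positive real numbers with 0 < a ≤ aᵢ ≤ A < ∞ and 0 < b ≤ bᵢ ≤ B < ∞ for all 1 ≤ i ≤ n. Then (∑_{i=1}^n aᵢ²)(∑_{i=1}^n bᵢ²) ≤ ((ab + AB)²/(4abAB)) (∑_{i=1}^n aᵢbᵢ)². -/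
/-- **Pólya–Szegő inequality**, multiplicative form. -/
theorem polya_szego_multiplicative
    (n : ℕ) (hn : 0 < n) (a A b B : ℝ) (ha : 0 < a) (hb : 0 < b)
    (av bv : Fin n → ℝ)
    (haA : ∀ i, a ≤ av i ∧ av i ≤ A) (hbB : ∀ i, b ≤ bv i ∧ bv i ≤ B) :
    (∑ i, (av i) ^ 2) * (∑ i, (bv i) ^ 2)
      ≤ (a * b + A * B) ^ 2 / (4 * a * b * A * B) * (∑ i, av i * bv i) ^ 2 := by
  set i0 : Fin n := ⟨0, hn⟩
  have hA : 0 < A := lt_of_lt_of_le ha ((haA i0).1.trans (haA i0).2)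
  have hB : 0 < B := lt_of_lt_of_le hb ((hbB i0).1.trans (hbB i0).2)
  set Sa := ∑ i, (av i) ^ 2 with hSa
  set Sb := ∑ i, (bv i) ^ 2 with hSb
  set Sab := ∑ i, av i * bv i with hSab
  have key : b * B * Sa + a * A * Sb ≤ (a * b + A * B) * Sab := by
    rw [hSa, hSb, hSab, Finset.mul_sum, Finset.mul_sum, Finset.mul_sum,
      ← Finset.sum_add_distrib]
    apply Finset.sum_le_sum
    intro i _
    obtain ⟨h1, h2⟩ := haA i
    obtain ⟨h3, h4⟩ := hbB i
    have p1 : 0 ≤ A * bv i - b * av i := by nlinarith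
    have p2 : 0 ≤ B * av i - a * bv i := by nlinarith
    nlinarith [mul_nonneg p1 p2]
  have hSa0 : 0 ≤ Sa := Finset.sum_nonneg fun i _ => sq_nonneg _
  have hSb0 : 0 ≤ Sb := Finset.sum_nonneg fun i _ => sq_nonneg _
  have hsum0 : 0 ≤ b * B * Sa + a * A * Sb := by positivity
  have hsq : 4 * (b * B * Sa) * (a * A * Sb) ≤ ((a * b + A * B) * Sab) ^ 2 := by
    nlinarith [sq_nonneg (b * B * Sa - a * A * Sb), sq_nonneg (b * B * Sa + a * A * Sb)]
  have hD : 0 < 4 * a * b * A * B := by positivity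
  rw [div_mul_eq_mul_div, le_div_iff₀ hD]
  nlinarith [hsq]
end

section
/- (Pólya–Szegő inequality, additive form) Let a₁,…,aₙ and b₁,…,bₙ be positive real numbers with 0 < a ≤ aᵢ ≤ A < ∞ and 0 < b ≤ bᵢ ≤ B < ∞ for all 1 ≤ i ≤ n. Then (∑_{i=1}^n aᵢ²)(∑_{i=1}^n bᵢ²) − (∑_{i=1}^n aᵢbᵢ)² ≤ ((AB − ab)²/(4abAB)) (∑_{i=1}^n aᵢbᵢ)². -/
/-- **Pólya–Szegő inequality**, additive form. -/
theorem polya_szego_additive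
    (n : ℕ) (hn : 0 < n) (a A b B : ℝ) (ha : 0 < a) (hb : 0 < b)
    (av bv : Fin n → ℝ)
    (haA : ∀ i, a ≤ av i ∧ av i ≤ A) (hbB : ∀ i, b ≤ bv i ∧ bv i ≤ B) :
    (∑ i, (av i) ^ 2) * (∑ i, (bv i) ^ 2) - (∑ i, av i * bv i) ^ 2
      ≤ (A * B - a * b) ^ 2 / (4 * a * b * A * B) * (∑ i, av i * bv i) ^ 2 := by
  set Sa := ∑ i, (av i) ^ 2 with hSa
  set Sb := ∑ i, (bv i) ^ 2 with hSb
  set Sab := ∑ i, av i * bv i with hSab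
  have i0 : Fin n := ⟨0, hn⟩
  have hA : 0 < A := lt_of_lt_of_le ha (le_trans (haA i0).1 (haA i0).2)
  have hB : 0 < B := lt_of_lt_of_le hb (le_trans (hbB i0).1 (hbB i0).2)
  have key : ∀ i : Fin n,
      (b * B) * (av i) ^ 2 + (a * A) * (bv i) ^ 2 ≤ (A * B + a * b) * (av i * bv i) := by
    intro i
    obtain ⟨h1, h2⟩ := haA i
    obtain ⟨h3, h4⟩ := hbB i
    nlinarith [mul_nonneg (sub_nonneg.2 (by nlinarith : a * bv i ≤ B * av i))
      (sub_nonneg.2 (by nlinarith : b * av i ≤ A * bv i))]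
  have hsum : (b * B) * Sa + (a * A) * Sb ≤ (A * B + a * b) * Sab := by
    rw [hSa, hSb, hSab, Finset.mul_sum, Finset.mul_sum, Finset.mul_sum,
      ← Finset.sum_add_distrib]
    exact Finset.sum_le_sum fun i _ => key i
  have hSanonneg : 0 ≤ Sa := Finset.sum_nonneg fun i _ => sq_nonneg _
  have hSbnonneg : 0 ≤ Sb := Finset.sum_nonneg fun i _ => sq_nonneg _
  have hlhs : 0 ≤ (b * B) * Sa + (a * A) * Sb := by positivity
  have hsq : ((b * B) * Sa + (a * A) * Sb) ^ 2 ≤ ((A * B + a * b) * Sab) ^ 2 := by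
    apply pow_le_pow_left₀ hlhs hsum
  rw [div_mul_eq_mul_div, le_div_iff₀ (by positivity : (0:ℝ) < 4 * a * b * A * B)]
  nlinarith [sq_nonneg ((b * B) * Sa - (a * A) * Sb), hsq,
    mul_pos (mul_pos ha hb) (mul_pos hA hB)]
end
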